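/- arXiv:1512.08823 — 8 statements merged into one kernel-verified Lean document; each statement's English description precedes it below -/
import Mathlib

section
/- Let A = (Σ, Q, δ, I) be a top-down tree automaton and let R be a strict partial order on Q (irreflexive and transitive) that is contained in the downward trace inclusion ⊆dw. Then P(id, R) is good for pruning, i.e., L(Prune(A, P(id, R))) = L(A), where P(id, R) relates two rules ⟨p,σ,r₁⋯rₙ⟩ and ⟨p,σ,r′₁⋯r′ₙ⟩ with the same source state and symbol iff rᵢ (R ∪ id) r′ᵢ for all i and rᵢ R r′ᵢ for some i. -/
/-- A tree over a ranked alphabet: a partial map from nodes (lists of child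
indices) to symbols, with finite, prefix-closed domain respecting ranks. -/
structure RTree (α : Type) (rank : α → ℕ) where
  label : List ℕ → Option α
  finite : Set.Finite {v : List ℕ | label v ≠ none}
  prefixClosed : ∀ v i, label (v ++ [i]) ≠ none → ∃ a, label v = some a ∧ i < rank a

namespace RTree

variable {α : Type} {rank : α → ℕ}

/-- A tree is closed if every node has all the children prescribed by the rank
of its symbol. -/
def IsClosed (t : RTree α rank) : Prop :=
  ∀ v a, t.label v = some a → ∀ i, i < rank a → t.label (v ++ [i]) ≠ none

/-- The domain of a run on `t`: the nodes of `t` together with all (possibly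
dangling) children of nodes of `t`. -/
def inRunDom (t : RTree α rank) (v : List ℕ) : Prop :=
  t.label v ≠ none ∨ ∃ v' i a, v = v' ++ [i] ∧ t.label v' = some a ∧ i < rank a

/-- A leaf of `t`: a node of `t` with no children in `t`. -/
def IsLeaf (t : RTree α rank) (v : List ℕ) : Prop :=
  t.label v ≠ none ∧ ∀ i, t.label (v ++ [i]) = none

end RTree

/-- A (nondeterministic, top-down) tree automaton, with a distinguished final
state `top`; leaf rules have right-hand side `[top]`, and rules for symbols of
positive rank have right-hand side of length equal to the rank. -/
structure TDTA (Q α : Type) (rank : α → ℕ) where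
  top : Q
  init : Set Q
  delta : Set (Q × α × List Q)
  rank_ok : ∀ τ ∈ delta, (rank τ.2.1 = 0 → τ.2.2 = [top]) ∧
    (0 < rank τ.2.1 → τ.2.2.length = rank τ.2.1)

namespace TDTA

variable {Q α : Type} {rank : α → ℕ}

/-- The right-hand side that a run `π` must match at node `v` labelled `a`. -/
def rhsOf (A : TDTA Q α rank) (a : α) (π : List ℕ → Q) (v : List ℕ) : List Q :=
  if rank a = 0 then [A.top] else (List.range (rank a)).map fun i => π (v ++ [i])

/-- `π` is a run of `A` on the tree `t`. -/
def IsRun (A : TDTA Q α rank) (t : RTree α rank) (π : List ℕ → Q) : Prop :=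
  ∀ v a, t.label v = some a → (π v, a, A.rhsOf a π v) ∈ A.delta

/-- The downward language of a state: closed trees accepted from it. -/
def dlang (A : TDTA Q α rank) (q : Q) : Set (RTree α rank) :=
  {t | t.IsClosed ∧ ∃ π, A.IsRun t π ∧ π [] = q}

/-- The language of the automaton. -/
def lang (A : TDTA Q α rank) : Set (RTree α rank) :=
  {t | ∃ q ∈ A.init, t ∈ A.dlang q}

/-- Pruning: keep exactly the transitions that are maximal w.r.t. `P`. -/
def prune (A : TDTA Q α rank) (P : Q × α × List Q → Q × α × List Q → Prop) :
    TDTA Q α rank where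
  top := A.top
  init := A.init
  delta := {τ | τ ∈ A.delta ∧ ¬∃ τ' ∈ A.delta, P τ τ'}
  rank_ok := fun τ hτ => A.rank_ok τ hτ.1

/-- Downward trace inclusion `q ⊆dw r`. -/
def dwIncl (A : TDTA Q α rank) (q r : Q) : Prop :=
  ∀ t : RTree α rank, t.IsClosed → ∀ π, A.IsRun t π → π [] = q →
    ∃ π', A.IsRun t π' ∧ π' [] = r

/-- Upward trace inclusion `q ⊆up(R) r` induced by a relation `R`. -/
def upIncl (A : TDTA Q α rank) (R : Q → Q → Prop) (q r : Q) : Prop :=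
  (q = A.top → r = A.top) ∧
  ∀ (t : RTree α rank) (v : List ℕ), t.IsLeaf v →
    ∀ πq, A.IsRun t πq → πq v = q →
      ∃ πr, A.IsRun t πr ∧ πr v = r ∧
        (∀ v', v' <+: v → πq v' ∈ A.init → πr v' ∈ A.init) ∧
        ∀ v' x, v' <+: v → v' ≠ v → t.inRunDom (v' ++ [x]) → ¬(v' ++ [x]) <+: v →
          R (πq (v' ++ [x])) (πr (v' ++ [x]))

/-- `D` is a downward simulation on `A`. -/
def IsDwSim (A : TDTA Q α rank) (D : Q → Q → Prop) : Prop :=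
  ∀ q r, D q r → (q = A.top → r = A.top) ∧
    ∀ a qs, (q, a, qs) ∈ A.delta →
      ∃ rs, (r, a, rs) ∈ A.delta ∧ List.Forall₂ D qs rs

/-- The maximal downward simulation `≼dw` (the union of all downward
simulations). -/
def dwSim (A : TDTA Q α rank) (q r : Q) : Prop :=
  ∃ D, A.IsDwSim D ∧ D q r

/-- `U` is an upward simulation on `A` induced by `R`. -/
def IsUpSim (A : TDTA Q α rank) (R U : Q → Q → Prop) : Prop :=
  ∀ q r, U q r → (q = A.top → r = A.top) ∧ (q ∈ A.init → r ∈ A.init) ∧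
    ∀ q' a qs, (q', a, qs) ∈ A.delta → ∀ i : Fin qs.length, qs.get i = q →
      ∃ r' rs, ∃ hlen : rs.length = qs.length, (r', a, rs) ∈ A.delta ∧
        rs.get (Fin.cast hlen.symm i) = r ∧ U q' r' ∧
        ∀ j : Fin qs.length, j ≠ i → R (qs.get j) (rs.get (Fin.cast hlen.symm j))

/-- The maximal upward simulation `≼up(R)` induced by `R`. -/
def upSim (A : TDTA Q α rank) (R : Q → Q → Prop) (q r : Q) : Prop :=
  ∃ U, A.IsUpSim R U ∧ U q r

/-- `W` is a downup-relation on `A`. -/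
def IsDownUp (A : TDTA Q α rank) (W : Q → Q → Prop) : Prop :=
  ∀ p q, W p q → ∀ (t : RTree α rank) (π : List ℕ → Q), A.IsRun t π → π [] = p →
    ∃ π', A.IsRun t π' ∧ π' [] = q ∧ ∀ v, t.inRunDom v → A.upSim W (π v) (π' v)

end TDTA

/-- The strict version `S ∖ S⁻¹` of a relation `S`. -/
def strictOf {Q : Type} (S : Q → Q → Prop) (q r : Q) : Prop := S q r ∧ ¬S r q

/-- Lifting of relations to tuples: pointwise `Dw` everywhere and `Ds` at some
position. -/
def liftStrict {Q : Type} (Dw Ds : Q → Q → Prop) (qs rs : List Q) : Prop :=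
  List.Forall₂ Dw qs rs ∧
    ∃ (i : ℕ) (h : i < qs.length) (h' : i < rs.length), Ds (qs.get ⟨i, h⟩) (rs.get ⟨i, h'⟩)

/-- The pruning relation `P(U, Dl)` comparing transitions with the same symbol:
sources by `U`, target tuples by `Dl`. -/
def pruneRel {Q α : Type} (U : Q → Q → Prop) (Dl : List Q → List Q → Prop) :
    Q × α × List Q → Q × α × List Q → Prop :=
  fun τ τ' => U τ.1 τ'.1 ∧ τ.2.1 = τ'.2.1 ∧ Dl τ.2.2 τ'.2.2

section GFPAux

open TDTA

variable {Q α : Type} {rank : α → ℕ}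

/-- Domains of trees are prefix-closed. -/
lemma RTree.label_ne_none_of_prefix {t : RTree α rank} :
    ∀ {v u : List ℕ}, t.label v ≠ none → u <+: v → t.label u ≠ none := by
  intro v
  induction v using List.reverseRecOn with
  | nil => intro u h hp; obtain rfl := List.prefix_nil.mp hp; exact h
  | append_singleton v i ih =>
    intro u h hp
    rcases List.prefix_concat_iff.mp hp with rfl | hp'
    · exact h
    · obtain ⟨a, ha, _⟩ := t.prefixClosed v i h
      exact ih (by simp [ha]) hp'

/-- The subtree of `t` rooted at the `i`-th child of the root. -/
def RTree.subtree (t : RTree α rank) (i : ℕ) : RTree α rank where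
  label w := t.label (i :: w)
  finite := by
    have : {w : List ℕ | t.label (i :: w) ≠ none} =
        (fun w => i :: w) ⁻¹' {v | t.label v ≠ none} := rfl
    rw [this]
    exact t.finite.preimage (List.cons_injective.injOn)
  prefixClosed := by
    intro w j h
    exact t.prefixClosed (i :: w) j h

@[simp] lemma RTree.subtree_label (t : RTree α rank) (i : ℕ) (w : List ℕ) :
    (t.subtree i).label w = t.label (i :: w) := rfl

lemma RTree.subtree_isClosed {t : RTree α rank} (h : t.IsClosed) (i : ℕ) :
    (t.subtree i).IsClosed := by
  intro w b hb j hj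
  exact h (i :: w) b hb j hj

lemma RTree.lt_rank_of_cons {t : RTree α rank} {a : α} (ha : t.label [] = some a)
    {i : ℕ} {w : List ℕ} (h : t.label (i :: w) ≠ none) : i < rank a := by
  have h1 : t.label [i] ≠ none := RTree.label_ne_none_of_prefix h ⟨w, rfl⟩
  obtain ⟨b, hb, hlt⟩ := t.prefixClosed [] i h1
  rw [ha] at hb
  cases hb
  exact hlt

lemma RTree.label_eq_none_of_root {t : RTree α rank} (h : t.label [] = none) (v : List ℕ) :
    t.label v = none := by
  by_contra hv
  exact RTree.label_ne_none_of_prefix hv (List.nil_prefix) h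

lemma RTree.ncard_subtree_lt (t : RTree α rank) (ht : t.label [] ≠ none) (i : ℕ) :
    {w | (t.subtree i).label w ≠ none}.ncard < {v | t.label v ≠ none}.ncard := by
  set D := {v | t.label v ≠ none} with hD
  set S := (fun w => (i :: w : List ℕ)) '' {w | (t.subtree i).label w ≠ none} with hS
  have h1 : {w | (t.subtree i).label w ≠ none}.ncard = S.ncard :=
    (Set.ncard_image_of_injective _ List.cons_injective).symm
  rw [h1]
  refine Set.ncard_lt_ncard ?_ t.finite
  rw [Set.ssubset_iff_subset_ne]
  constructor
  · rintro _ ⟨w, hw, rfl⟩; exact hw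
  · intro hEq
    have : ([] : List ℕ) ∈ S := hEq ▸ ht
    obtain ⟨w, _, hw⟩ := this
    exact List.cons_ne_nil _ _ hw

lemma TDTA.isRun_subtree {A : TDTA Q α rank} {t : RTree α rank} {π : List ℕ → Q}
    (h : A.IsRun t π) (i : ℕ) : A.IsRun (t.subtree i) (fun w => π (i :: w)) := by
  intro w b hb
  exact h (i :: w) b hb

/-- Pruned runs are runs. -/
lemma TDTA.isRun_of_prune {A : TDTA Q α rank} {P : Q × α × List Q → Q × α × List Q → Prop}
    {t : RTree α rank} {π : List ℕ → Q} (h : (A.prune P).IsRun t π) : A.IsRun t π :=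
  fun v a hv => (h v a hv).1

lemma exists_maximal_of_finite {β : Type*} {S : Set β} (hS : S.Finite) (hne : S.Nonempty)
    (r : β → β → Prop) (hirr : ∀ x, ¬r x x) (htr : ∀ a b c, r a b → r b c → r a c) :
    ∃ x ∈ S, ∀ y ∈ S, ¬r x y := by
  haveI := hS.to_subtype
  haveI : IsTrans S (fun x y : S => r y.1 x.1) := ⟨fun a b c h1 h2 => htr _ _ _ h2 h1⟩
  haveI : IsIrrefl S (fun x y : S => r y.1 x.1) := ⟨fun a h => hirr a.1 h⟩
  have wf : WellFounded (fun x y : S => r y.1 x.1) :=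
    Finite.wellFounded_of_trans_of_irrefl _
  obtain ⟨x, -, hmax⟩ := wf.has_min Set.univ ⟨⟨hne.choose, hne.choose_spec⟩, trivial⟩
  exact ⟨x.1, x.2, fun y hy hr => hmax ⟨y, hy⟩ trivial hr⟩

lemma liftStrict_irrefl {R : Q → Q → Prop} (hirr : ∀ q, ¬R q q) (rs : List Q) :
    ¬liftStrict (fun x y => R x y ∨ x = y) R rs rs := by
  rintro ⟨-, i, h, h', hR⟩
  exact hirr _ hR

lemma liftStrict_trans {R : Q → Q → Prop} (htrans : ∀ a b c, R a b → R b c → R a c)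
    {xs ys zs : List Q} (h1 : liftStrict (fun x y => R x y ∨ x = y) R xs ys)
    (h2 : liftStrict (fun x y => R x y ∨ x = y) R ys zs) :
    liftStrict (fun x y => R x y ∨ x = y) R xs zs := by
  obtain ⟨f1, i, hi, hi', hR1⟩ := h1
  obtain ⟨f2, -⟩ := h2
  obtain ⟨l1, g1⟩ := List.forall₂_iff_get.mp f1
  obtain ⟨l2, g2⟩ := List.forall₂_iff_get.mp f2
  have hiz : i < zs.length := l2 ▸ hi'
  refine ⟨List.forall₂_iff_get.mpr ⟨l1.trans l2, fun j hj1 hj3 => ?_⟩, i, hi, hiz, ?_⟩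
  · have hj2 : j < ys.length := l1 ▸ hj1
    rcases g1 j hj1 hj2 with h | h
    · rcases g2 j hj2 hj3 with h' | h'
      · exact Or.inl (htrans _ _ _ h h')
      · exact Or.inl (h' ▸ h)
    · rcases g2 j hj2 hj3 with h' | h'
      · exact Or.inl (h ▸ h')
      · exact Or.inr (h.trans h')
  · rcases g2 i hi' hiz with h | h
    · exact htrans _ _ _ hR1 h
    · exact h ▸ hR1

lemma forall₂_getD {W : Q → Q → Prop} {rs rs' : List Q} (h : List.Forall₂ W rs rs')
    {i : ℕ} (hi : i < rs.length) (d d' : Q) : W (rs.getD i d) (rs'.getD i d') := by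
  obtain ⟨hl, hg⟩ := List.forall₂_iff_get.mp h
  rw [List.getD_eq_getElem _ _ hi, List.getD_eq_getElem _ _ (hl ▸ hi)]
  exact hg i hi (hl ▸ hi)

end GFPAux

lemma prune_run_exists {Q α : Type} [Fintype Q] {rank : α → ℕ}
    (A : TDTA Q α rank) (R : Q → Q → Prop)
    (hirr : ∀ q, ¬R q q) (htrans : ∀ a b c, R a b → R b c → R a c)
    (hsub : ∀ q r, R q r → A.dwIncl q r) :
    ∀ (n : ℕ) (t : RTree α rank), {v | t.label v ≠ none}.ncard = n → t.IsClosed →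
      ∀ π, A.IsRun t π →
        ∃ π', (A.prune (pruneRel Eq (liftStrict (fun x y => R x y ∨ x = y) R))).IsRun t π' ∧
          π' [] = π [] := by
  intro n
  induction n using Nat.strong_induction_on with
  | _ n IH =>
  intro t hcard hclosed π hπ
  set P := pruneRel Eq (liftStrict (fun x y => R x y ∨ x = y) R) with hPdef
  cases h0 : t.label [] with
  | none =>
    refine ⟨π, ?_, rfl⟩
    intro v b hv
    simp [RTree.label_eq_none_of_root h0 v] at hv
  | some a =>
    set q := π [] with hq
    have hroot : (q, a, A.rhsOf a π []) ∈ A.delta := hπ [] a h0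
    set qs := A.rhsOf a π [] with hqsdef
    have hlen_qs : rank a ≠ 0 → qs.length = rank a := by
      intro h; simp [hqsdef, TDTA.rhsOf, h]
    set S : Set (List Q) :=
      {rs | (q, a, rs) ∈ A.delta ∧ rs.length = qs.length ∧
        ∀ i, i < rank a → ∃ σ, A.IsRun (t.subtree i) σ ∧ σ [] = rs.getD i q} with hSdef
    have hqsS : qs ∈ S := by
      refine ⟨hroot, rfl, ?_⟩
      intro i hi
      refine ⟨fun w => π (i :: w), TDTA.isRun_subtree hπ i, ?_⟩
      have hr0 : rank a ≠ 0 := by omega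
      have hlen : i < qs.length := by rw [hlen_qs hr0]; exact hi
      rw [List.getD_eq_getElem _ _ hlen]
      simp [hqsdef, TDTA.rhsOf, hr0]
    have hSfin : S.Finite :=
      (List.finite_length_eq Q qs.length).subset (fun rs hrs => hrs.2.1)
    obtain ⟨rs, hrsS, hrsmax⟩ := exists_maximal_of_finite hSfin ⟨qs, hqsS⟩
      (liftStrict (fun x y => R x y ∨ x = y) R)
      (liftStrict_irrefl hirr) (fun _ _ _ h1 h2 => liftStrict_trans htrans h1 h2)
    have hrslen : rank a ≠ 0 → rs.length = rank a := fun h => hrsS.2.1.trans (hlen_qs h)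
    have hmem : (q, a, rs) ∈ (A.prune P).delta := by
      refine ⟨hrsS.1, ?_⟩
      rintro ⟨⟨q', a', rs'⟩, hτ'δ, hEqq, hEqa, hlt⟩
      simp only at hEqq hEqa hlt
      subst hEqq; subst hEqa
      have hlen' : rs.length = rs'.length := (List.forall₂_iff_get.mp hlt.1).1
      have hrs'S : rs' ∈ S := by
        refine ⟨hτ'δ, hlen'.symm.trans hrsS.2.1, ?_⟩
        intro i hi
        obtain ⟨σ, hσ, hσ0⟩ := hrsS.2.2 i hi
        have hilen : i < rs.length := by rw [hrslen (by omega)]; exact hi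
        rcases forall₂_getD hlt.1 hilen q q with hR | hEq
        · obtain ⟨σ', hσ', hσ'0⟩ := hsub _ _ hR (t.subtree i)
            (RTree.subtree_isClosed hclosed i) σ hσ hσ0
          exact ⟨σ', hσ', hσ'0⟩
        · exact ⟨σ, hσ, hσ0.trans hEq⟩
      exact hrsmax rs' hrs'S hlt
    have hsubruns : ∀ i : ℕ, ∃ σ : List ℕ → Q, i < rank a →
        (A.prune P).IsRun (t.subtree i) σ ∧ σ [] = rs.getD i q := by
      intro i
      by_cases hi : i < rank a
      · obtain ⟨σ, hσ, hσ0⟩ := hrsS.2.2 i hi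
        have hlt : {w | (t.subtree i).label w ≠ none}.ncard < n := by
          rw [← hcard]; exact RTree.ncard_subtree_lt t (by simp [h0]) i
        obtain ⟨σ', hσ', hσ'0⟩ := IH _ hlt (t.subtree i) rfl
          (RTree.subtree_isClosed hclosed i) σ hσ
        exact ⟨σ', fun _ => ⟨hσ', hσ'0.trans hσ0⟩⟩
      · exact ⟨fun _ => q, fun h => absurd h hi⟩
    choose σf hσf using hsubruns
    let π' : List ℕ → Q := fun v => match v with
      | [] => q
      | i :: w => σf i w
    have hπ'cons : ∀ i w, π' (i :: w) = σf i w := fun _ _ => rfl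
    have hrhs : (A.prune P).rhsOf a π' [] = rs := by
      by_cases hr0 : rank a = 0
      · have hrs : rs = [A.top] := (A.rank_ok (q, a, rs) hrsS.1).1 hr0
        rw [hrs]
        simp [TDTA.rhsOf, TDTA.prune, hr0]
      · have hlen : ((A.prune P).rhsOf a π' []).length = rs.length := by
          simp [TDTA.rhsOf, hr0, hrslen hr0]
        apply List.ext_getElem hlen
        intro i h1 h2
        have hi : i < rank a := by
          simpa [TDTA.rhsOf, hr0] using h1
        have : ((A.prune P).rhsOf a π' [])[i] = σf i [] := by
          simp [TDTA.rhsOf, hr0, hi, hπ'cons]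
        rw [this, (hσf i hi).2, List.getD_eq_getElem _ _ h2]
    refine ⟨π', ?_, rfl⟩
    intro v b hv
    cases v with
    | nil =>
      rw [h0] at hv
      injection hv with hab
      subst hab
      show (q, a, (A.prune P).rhsOf a π' []) ∈ (A.prune P).delta
      rw [hrhs]
      exact hmem
    | cons i w =>
      have hi : i < rank a := RTree.lt_rank_of_cons (w := w) h0 (by simp [hv])
      exact (hσf i hi).1 w b hv

/-- For every strict partial order `R` contained in downward trace inclusion,
`P(id, R)` is good for pruning. -/
theorem statement_0 {Q α : Type} [Fintype Q] [Fintype α] {rank : α → ℕ}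
    (A : TDTA Q α rank) (R : Q → Q → Prop)
    (hirr : ∀ q, ¬R q q) (htrans : ∀ a b c, R a b → R b c → R a c)
    (hsub : ∀ q r, R q r → A.dwIncl q r) :
    (A.prune (pruneRel Eq (liftStrict (fun x y => R x y ∨ x = y) R))).lang = A.lang := by
  ext t
  constructor
  · rintro ⟨q, hq, hcl, π, hπ, hπ0⟩
    exact ⟨q, hq, hcl, π, TDTA.isRun_of_prune hπ, hπ0⟩
  · rintro ⟨q, hq, hcl, π, hπ, hπ0⟩
    obtain ⟨π', h1, h2⟩ := prune_run_exists A R hirr htrans hsub _ t rfl hcl π hπ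
    exact ⟨q, hq, hcl, π', h1, h2.trans hπ0⟩
end

section
/- Let A = (Σ, Q, δ, I) be a top-down tree automaton and let V be a relation on Q such that (1) V is a downward simulation on A, and (2) id ⊆ V ⊆ ≼up(V), where ≼up(V) is the maximal upward simulation induced by V. Then V is a downup-relation. -/
section BuildRun
open Classical

variable {Q α : Type} {rank : α → ℕ}

/-- Auxiliary: given the state `r` at node `v` of the run being built, choose the
state of child `i` using the downward simulation. -/
noncomputable def childState (A : TDTA Q α rank) (V : Q → Q → Prop)
    (hsim : A.IsDwSim V) (t : RTree α rank) (π : List ℕ → Q)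
    (hrun : A.IsRun t π) (r : Q) (v : List ℕ) (i : ℕ) : Q :=
  if h : ∃ a, t.label v = some a ∧ V (π v) r then
    (((hsim (π v) r h.choose_spec.2).2 h.choose (A.rhsOf h.choose π v)
        (hrun v h.choose h.choose_spec.1)).choose.getD i (π []))
  else π (v ++ [i])

/-- Auxiliary: the run built by descending the downward simulation; the argument
is the reversed node address. -/
noncomputable def buildAux (A : TDTA Q α rank) (V : Q → Q → Prop)
    (hsim : A.IsDwSim V) (t : RTree α rank) (π : List ℕ → Q)
    (hrun : A.IsRun t π) (q : Q) : List ℕ → Q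
  | [] => q
  | i :: rw => childState A V hsim t π hrun (buildAux A V hsim t π hrun q rw) rw.reverse i

lemma childState_spec_aux (A : TDTA Q α rank) (V : Q → Q → Prop)
    (hsim : A.IsDwSim V) (t : RTree α rank) (π : List ℕ → Q)
    (hrun : A.IsRun t π) (r : Q) (v : List ℕ)
    (h : ∃ a, t.label v = some a ∧ V (π v) r) :
    ∃ rs, (r, h.choose, rs) ∈ A.delta ∧ List.Forall₂ V (A.rhsOf h.choose π v) rs ∧
      ∀ i, childState A V hsim t π hrun r v i = rs.getD i (π []) := by
  refine ⟨_, ((hsim (π v) r h.choose_spec.2).2 h.choose (A.rhsOf h.choose π v)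
      (hrun v h.choose h.choose_spec.1)).choose_spec.1,
    ((hsim (π v) r h.choose_spec.2).2 h.choose (A.rhsOf h.choose π v)
      (hrun v h.choose h.choose_spec.1)).choose_spec.2, fun i => ?_⟩
  unfold childState
  rw [dif_pos h]

lemma childState_spec (A : TDTA Q α rank) (V : Q → Q → Prop)
    (hsim : A.IsDwSim V) (t : RTree α rank) (π : List ℕ → Q)
    (hrun : A.IsRun t π) (r : Q) (v : List ℕ) (a : α)
    (hl : t.label v = some a) (hV : V (π v) r) :
    ∃ rs, (r, a, rs) ∈ A.delta ∧ List.Forall₂ V (A.rhsOf a π v) rs ∧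
      ∀ i, childState A V hsim t π hrun r v i = rs.getD i (π []) := by
  have h : ∃ a, t.label v = some a ∧ V (π v) r := ⟨a, hl, hV⟩
  have ha : h.choose = a := by
    have h1 := h.choose_spec.1
    exact Option.some_injective _ (h1.symm.trans hl)
  obtain ⟨rs, h1, h2, h3⟩ := childState_spec_aux A V hsim t π hrun r v h
  rw [ha] at h1 h2
  exact ⟨rs, h1, h2, h3⟩

end BuildRun

/-- Any downward simulation `V` with `id ⊆ V ⊆ ≼up(V)` is a downup-relation. -/
theorem statement_2 {Q α : Type} [Fintype Q] [Fintype α] {rank : α → ℕ}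
    (A : TDTA Q α rank) (V : Q → Q → Prop)
    (hsim : A.IsDwSim V) (hrefl : ∀ q, V q q)
    (hup : ∀ q r, V q r → A.upSim V q r) :
    A.IsDownUp V := by
  intro p q hpq t π hrun hroot
  classical
  set π' : List ℕ → Q := fun v => buildAux A V hsim t π hrun q v.reverse with hπ'
  have hchild : ∀ v i, π' (v ++ [i]) = childState A V hsim t π hrun (π' v) v i := by
    intro v i
    simp [hπ', buildAux, List.reverse_append]
  have hroot' : π' [] = q := rfl
  -- Invariant: V relates π and π' everywhere on the run domain.
  have hinv : ∀ v, t.inRunDom v → V (π v) (π' v) := by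
    intro v
    induction v using List.reverseRecOn with
    | nil => intro _; rw [hroot', hroot]; exact hpq
    | append_singleton v i ih =>
      intro hdom
      obtain ⟨a, hla, hia⟩ : ∃ a, t.label v = some a ∧ i < rank a := by
        rcases hdom with h | ⟨v', j, a, heq, hl, hj⟩
        · exact t.prefixClosed v i h
        · obtain ⟨h1, h2⟩ := List.append_inj' heq rfl
          subst h1
          have : j = i := by simpa using h2.symm
          exact ⟨a, hl, this ▸ hj⟩
      have hV : V (π v) (π' v) := ih (Or.inl (by simp [hla]))
      obtain ⟨rs, hrs, hf, hget⟩ := childState_spec A V hsim t π hrun (π' v) v a hla hV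
      rw [hchild, hget]
      have hrk : rank a ≠ 0 := by omega
      have hlen1 : (A.rhsOf a π v).length = rank a := by
        simp [TDTA.rhsOf, if_neg hrk]
      have hlen : rs.length = rank a := by
        have := List.Forall₂.length_eq hf
        omega
      have hgi : rs.getD i (π []) = rs.get ⟨i, by omega⟩ := by
        rw [List.getD_eq_getElem _ _ (by omega)]
        simp
      rw [hgi]
      have hVg := List.forall₂_iff_get.mp hf |>.2 i (by omega) (by omega)
      have hq : (A.rhsOf a π v).get ⟨i, by omega⟩ = π (v ++ [i]) := by
        simp [TDTA.rhsOf, if_neg hrk]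
      rwa [hq] at hVg
  -- π' is a run.
  have hrun' : A.IsRun t π' := by
    intro v a hla
    have hV : V (π v) (π' v) := hinv v (Or.inl (by simp [hla]))
    obtain ⟨rs, hrs, hf, hget⟩ := childState_spec A V hsim t π hrun (π' v) v a hla hV
    have hrhs : A.rhsOf a π' v = rs := by
      by_cases h0 : rank a = 0
      · have := (A.rank_ok (π' v, a, rs) hrs).1 h0
        simp only [TDTA.rhsOf, if_pos h0]
        exact this.symm
      · have hlen : rs.length = rank a := (A.rank_ok (π' v, a, rs) hrs).2 (Nat.pos_of_ne_zero h0)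
        apply List.ext_getElem
        · simp [TDTA.rhsOf, if_neg h0, hlen]
        · intro i hi1 hi2
          have hi : i < rank a := by
            simpa [TDTA.rhsOf, if_neg h0] using hi1
          simp only [TDTA.rhsOf, if_neg h0, List.getElem_map, List.getElem_range]
          rw [hchild, hget]
          rw [List.getD_eq_getElem _ _ (by omega)]
    rw [hrhs]
    exact hrs
  exact ⟨π', hrun', hroot', fun v hv => hup _ _ (hinv v hv)⟩
end

section
/- There exists a top-down tree automaton A = (Σ, Q, δ, I) on which the maximal downward simulation preorder ≼dw is not a downup-relation. -/
/-- There is a tree automaton on which the maximal downward simulation preorder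
`≼dw` is not a downup-relation. -/
theorem statement_4 : ∃ (Q α : Type) (_ : Fintype Q) (_ : Fintype α)
    (rank : α → ℕ) (A : TDTA Q α rank), ¬A.IsDownUp A.dwSim := by
  refine ⟨Fin 3, Unit, inferInstance, inferInstance, fun _ => 0,
    { top := 0
      init := {1}
      delta := {(1, (), [0]), (2, (), [0])}
      rank_ok := ?_ }, ?_⟩
  · rintro τ (rfl | rfl) <;> exact ⟨fun _ => rfl, fun h => absurd h (by simp)⟩
  · intro h
    -- the tree with a single node labelled ()
    set A : TDTA (Fin 3) Unit (fun _ => 0) :=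
      { top := 0
        init := {1}
        delta := {(1, (), [0]), (2, (), [0])}
        rank_ok := by
          rintro τ (rfl | rfl) <;> exact ⟨fun _ => rfl, fun h => absurd h (by simp)⟩ }
    have hD : A.dwSim 1 2 := by
      refine ⟨fun x y => (x = 1 ∧ y = 2) ∨ (x = 0 ∧ y = 0), ?_, Or.inl ⟨rfl, rfl⟩⟩
      rintro q r (⟨rfl, rfl⟩ | ⟨rfl, rfl⟩)
      · refine ⟨fun h => absurd h (by decide), ?_⟩
        rintro a qs (h | h)
        · simp only [Prod.mk.injEq] at h
          obtain ⟨-, -, rfl⟩ := h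
          exact ⟨[0], Or.inr rfl, List.Forall₂.cons (Or.inr ⟨rfl, rfl⟩) List.Forall₂.nil⟩
        · simp_all
      · refine ⟨fun _ => rfl, ?_⟩
        rintro a qs (h | h) <;> simp_all
    let t : RTree Unit (fun _ => 0) :=
      { label := fun v => if v = [] then some () else none
        finite := Set.Finite.subset (Set.finite_singleton []) (by
          intro v hv
          by_cases h : v = [] <;> simp_all)
        prefixClosed := by
          intro v i hv
          exfalso
          apply hv
          have : v ++ [i] ≠ [] := by simp
          simp [this] }
    have hrun : A.IsRun t (fun _ => 1) := by
      intro v a hv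
      have hv0 : v = [] := by
        by_contra hne
        simp [t, hne] at hv
      subst hv0
      simp only [TDTA.rhsOf, if_pos rfl]
      exact Or.inl rfl
    obtain ⟨π', _, hπ'0, hup⟩ := h 1 2 hD t (fun _ => 1) hrun rfl
    have hdom : t.inRunDom [] := Or.inl (by simp [t])
    have := hup [] hdom
    rw [hπ'0] at this
    obtain ⟨U, hU, hU12⟩ := this
    have := (hU 1 2 hU12).2.1 rfl
    exact absurd this (by decide)
end

section
/- Let A = (Σ, Q, δ, I) be a top-down tree automaton, let ≼dw be the maximal downward simulation preorder and <dw = ≼dw ∖ (≼dw)⁻¹ its strict version, and let ⊆up(≼dw) be the upward trace inclusion induced by ≼dw. Then P(⊆up(≼dw), <dw) is good for pruning, i.e., L(Prune(A, P(⊆up(≼dw), <dw))) = L(A), where P(⊆up(≼dw), <dw) relates rules ⟨p,σ,r₁⋯rₙ⟩ and ⟨p′,σ,r′₁⋯r′ₙ⟩ iff p ⊆up(≼dw) p′, rᵢ ≼dw r′ᵢ for all i, and rᵢ <dw r′ᵢ for some i. -/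
/-! ### Auxiliary development for `statement_7` -/

section GFPAux

variable {Q α : Type} {rank : α → ℕ}

theorem GFP.prefix_antisymm {u v : List ℕ} (h1 : u <+: v) (h2 : v <+: u) : u = v := by
  obtain ⟨s, rfl⟩ := h1
  have := h2.length_le
  simp at this
  simp [this]

theorem GFP.snoc_not_prefix_self {u : List ℕ} {x : ℕ} (h : u ++ [x] <+: u) : False := by
  have := h.length_le
  simp at this

theorem GFP.map_getD_range (l : List Q) (d : Q) (n : ℕ) (h : l.length = n) :
    ((List.range n).map fun i => l.getD i d) = l := by
  subst h
  apply List.ext_get (by simp)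
  intro i h1 h2
  have hi : i < l.length := by simpa using h1
  simp [List.getD, List.getElem?_eq_getElem hi]

namespace TDTA

theorem dwSim_isDwSim (A : TDTA Q α rank) : A.IsDwSim A.dwSim := by
  rintro q r ⟨D, hD, hqr⟩
  refine ⟨fun h => (hD q r hqr).1 h, fun a qs hτ => ?_⟩
  obtain ⟨rs, hrs, hfa⟩ := (hD q r hqr).2 a qs hτ
  exact ⟨rs, hrs, hfa.imp fun _ _ hxy => ⟨D, hD, hxy⟩⟩

theorem dwSim_refl (A : TDTA Q α rank) (q : Q) : A.dwSim q q := by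
  refine ⟨Eq, ?_, rfl⟩
  rintro q r rfl
  exact ⟨fun h => h, fun a qs hτ => ⟨qs, hτ, List.forall₂_same.mpr fun x _ => rfl⟩⟩

theorem dwSim_trans (A : TDTA Q α rank) {q r s : Q}
    (h1 : A.dwSim q r) (h2 : A.dwSim r s) : A.dwSim q s := by
  refine ⟨fun x z => ∃ y, A.dwSim x y ∧ A.dwSim y z, ?_, r, h1, h2⟩
  rintro x z ⟨y, hxy, hyz⟩
  constructor
  · intro hx
    exact (A.dwSim_isDwSim y z hyz).1 ((A.dwSim_isDwSim x y hxy).1 hx)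
  · intro a qs hτ
    obtain ⟨rs1, hm1, hf1⟩ := (A.dwSim_isDwSim x y hxy).2 a qs hτ
    obtain ⟨rs2, hm2, hf2⟩ := (A.dwSim_isDwSim y z hyz).2 a rs1 hm1
    refine ⟨rs2, hm2, ?_⟩
    rw [List.forall₂_iff_get] at hf1 hf2 ⊢
    obtain ⟨hl1, hg1⟩ := hf1
    obtain ⟨hl2, hg2⟩ := hf2
    exact ⟨hl1.trans hl2, fun i h₁ h₂ =>
      ⟨rs1.get ⟨i, hl1 ▸ h₁⟩, hg1 i h₁ (hl1 ▸ h₁), hg2 i (hl1 ▸ h₁) h₂⟩⟩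

theorem dwSim_top (A : TDTA Q α rank) {r : Q} (h : A.dwSim A.top r) : r = A.top :=
  (A.dwSim_isDwSim _ _ h).1 rfl

open Classical in
noncomputable def pick (A : TDTA Q α rank) (q' : Q) (a : α) (qs : List Q) : List Q :=
  if h : ∃ rs, (q', a, rs) ∈ A.delta ∧ List.Forall₂ A.dwSim qs rs then h.choose else []

theorem pick_spec (A : TDTA Q α rank) {q q' : Q} (h : A.dwSim q q') {a : α} {qs : List Q}
    (hτ : (q, a, qs) ∈ A.delta) :
    (q', a, A.pick q' a qs) ∈ A.delta ∧ List.Forall₂ A.dwSim qs (A.pick q' a qs) := by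
  have hex : ∃ rs, (q', a, rs) ∈ A.delta ∧ List.Forall₂ A.dwSim qs rs :=
    (A.dwSim_isDwSim q q' h).2 a qs hτ
  rw [pick, dif_pos hex]
  exact hex.choose_spec

theorem rhsOf_length (A : TDTA Q α rank) (a : α) (π : List ℕ → Q) (w : List ℕ)
    (h : rank a ≠ 0) : (A.rhsOf a π w).length = rank a := by
  simp [TDTA.rhsOf, h]

theorem rhsOf_get (A : TDTA Q α rank) (a : α) (π : List ℕ → Q) (w : List ℕ) {x : ℕ}
    (hx : x < rank a) (h1 : x < (A.rhsOf a π w).length) :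
    (A.rhsOf a π w).get ⟨x, h1⟩ = π (w ++ [x]) := by
  have h0 : rank a ≠ 0 := by omega
  simp [TDTA.rhsOf, h0]

end TDTA

/-- Truncation of a tree at `v`: everything strictly below `v` is removed. -/
def GFP.truncAt (t : RTree α rank) (v : List ℕ) : RTree α rank where
  label w := if v <+: w ∧ w ≠ v then none else t.label w
  finite := t.finite.subset fun w hw h => hw (by simp [h])
  prefixClosed := fun w i hwi => by
    have hcond : ¬(v <+: w ++ [i] ∧ w ++ [i] ≠ v) := fun hc => hwi (if_pos hc)
    have hlab : t.label (w ++ [i]) ≠ none := fun h => hwi (by simp [h])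
    obtain ⟨a, ha, hia⟩ := t.prefixClosed w i hlab
    refine ⟨a, ?_, hia⟩
    have hnc : ¬(v <+: w ∧ w ≠ v) := by
      rintro ⟨hvw, hwv⟩
      refine hcond ⟨hvw.trans ⟨[i], rfl⟩, fun he => ?_⟩
      have := hvw.length_le
      rw [← he] at this
      simp at this
    show (if v <+: w ∧ w ≠ v then none else t.label w) = some a
    rw [if_neg hnc]
    exact ha

theorem GFP.truncAt_label (t : RTree α rank) (v w : List ℕ) :
    (GFP.truncAt t v).label w = if v <+: w ∧ w ≠ v then none else t.label w := rfl

theorem GFP.truncAt_label_of_prefix {t : RTree α rank} {v w : List ℕ} (h : w <+: v) :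
    (GFP.truncAt t v).label w = t.label w := by
  rw [GFP.truncAt_label]
  exact if_neg fun hc => hc.2 (GFP.prefix_antisymm h hc.1)

theorem GFP.truncAt_run {A : TDTA Q α rank} {t : RTree α rank} {π : List ℕ → Q}
    (h : A.IsRun t π) (v : List ℕ) : A.IsRun (GFP.truncAt t v) π := by
  intro w a hwa
  apply h w a
  rw [GFP.truncAt_label] at hwa
  by_cases hc : v <+: w ∧ w ≠ v
  · rw [if_pos hc] at hwa; exact absurd hwa (by simp)
  · rwa [if_neg hc] at hwa

theorem GFP.truncAt_leaf {t : RTree α rank} {v : List ℕ} {a : α}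
    (h : t.label v = some a) : (GFP.truncAt t v).IsLeaf v := by
  constructor
  · rw [GFP.truncAt_label_of_prefix (List.prefix_refl v), h]; simp
  · intro i
    rw [GFP.truncAt_label]
    rw [if_pos]
    exact ⟨⟨[i], rfl⟩, fun he => GFP.snoc_not_prefix_self (u := v) (x := i) (by rw [he])⟩

noncomputable def GFP.rebuildAux (A : TDTA Q α rank) (t : RTree α rank) (π πr : List ℕ → Q)
    (v : List ℕ) (rs : List Q) : List ℕ → Q
  | [] => πr []
  | x :: wrev =>
    if wrev.reverse = v then rs.getD x A.top
    else if wrev.reverse <+: v then πr (wrev.reverse ++ [x])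
    else (t.label wrev.reverse).elim A.top fun a =>
      (A.pick (GFP.rebuildAux A t π πr v rs wrev) a (A.rhsOf a π wrev.reverse)).getD x A.top

noncomputable def GFP.rebuild (A : TDTA Q α rank) (t : RTree α rank) (π πr : List ℕ → Q)
    (v : List ℕ) (rs : List Q) (w : List ℕ) : Q :=
  GFP.rebuildAux A t π πr v rs w.reverse

theorem GFP.rebuild_nil (A : TDTA Q α rank) (t : RTree α rank) (π πr : List ℕ → Q)
    (v : List ℕ) (rs : List Q) : GFP.rebuild A t π πr v rs [] = πr [] := rfl

theorem GFP.rebuild_snoc (A : TDTA Q α rank) (t : RTree α rank) (π πr : List ℕ → Q)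
    (v : List ℕ) (rs : List Q) (w : List ℕ) (x : ℕ) :
    GFP.rebuild A t π πr v rs (w ++ [x]) =
      if w = v then rs.getD x A.top
      else if w <+: v then πr (w ++ [x])
      else (t.label w).elim A.top fun a =>
        (A.pick (GFP.rebuild A t π πr v rs w) a (A.rhsOf a π w)).getD x A.top := by
  have h : (w ++ [x]).reverse = x :: w.reverse := by simp
  rw [GFP.rebuild, h, GFP.rebuildAux, List.reverse_reverse]
  rfl

theorem GFP.rebuild_prefix (A : TDTA Q α rank) (t : RTree α rank) (π πr : List ℕ → Q)
    (v : List ℕ) (rs : List Q) {w : List ℕ} (hw : w <+: v) :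
    GFP.rebuild A t π πr v rs w = πr w := by
  rcases List.eq_nil_or_concat w with rfl | ⟨u, x, rfl⟩
  · rfl
  · simp only [List.concat_eq_append] at hw ⊢
    rw [GFP.rebuild_snoc]
    have hu : u <+: v := List.IsPrefix.trans ⟨[x], rfl⟩ hw
    have hune : u ≠ v := by
      rintro rfl
      exact GFP.snoc_not_prefix_self hw
    rw [if_neg hune, if_pos hu]

theorem GFP.forall₂_dwSim_getD (A : TDTA Q α rank) {qs rs : List Q}
    (h : List.Forall₂ A.dwSim qs rs) {x : ℕ} (hx : x < qs.length) :
    A.dwSim (qs.get ⟨x, hx⟩) (rs.getD x A.top) := by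
  obtain ⟨hl, hg⟩ := List.forall₂_iff_get.mp h
  have hx2 : x < rs.length := hl ▸ hx
  have hgd : rs.getD x A.top = rs.get ⟨x, hx2⟩ := by
    simp [List.getD, List.getElem?_eq_getElem hx2]
  rw [hgd]
  exact hg x hx hx2

theorem GFP.rebuild_sim (A : TDTA Q α rank) (t : RTree α rank) (π πr : List ℕ → Q)
    (v : List ℕ) (a0 : α) (rs : List Q)
    (hrun : A.IsRun t π)
    (hva : t.label v = some a0)
    (hfa : List.Forall₂ A.dwSim (A.rhsOf a0 π v) rs)
    (hoff : ∀ v' x, v' <+: v → v' ≠ v → (GFP.truncAt t v).inRunDom (v' ++ [x]) →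
      ¬(v' ++ [x]) <+: v → A.dwSim (π (v' ++ [x])) (πr (v' ++ [x]))) :
    ∀ w, t.label w ≠ none → ¬ w <+: v → A.dwSim (π w) (GFP.rebuild A t π πr v rs w) := by
  intro w
  induction w using List.reverseRecOn with
  | nil => exact fun _ h => absurd ⟨v, rfl⟩ h
  | append_singleton u x ih =>
    intro hlab hnpre
    obtain ⟨a, hua, hxa⟩ := t.prefixClosed u x hlab
    rw [GFP.rebuild_snoc]
    by_cases huv : u = v
    · subst huv
      rw [if_pos rfl]
      rw [hua] at hva
      obtain rfl : a = a0 := Option.some.inj hva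
      have hx1 : x < (A.rhsOf a π u).length := by
        rw [A.rhsOf_length _ _ _ (by omega)]
        exact hxa
      have hsim := GFP.forall₂_dwSim_getD A hfa hx1
      rw [A.rhsOf_get _ _ _ hxa hx1] at hsim
      exact hsim
    · rw [if_neg huv]
      by_cases hupre : u <+: v
      · rw [if_pos hupre]
        refine hoff u x hupre huv (Or.inr ⟨u, x, a, rfl, ?_, hxa⟩) hnpre
        rw [GFP.truncAt_label, if_neg (fun hc => huv (GFP.prefix_antisymm hupre hc.1))]
        exact hua
      · rw [if_neg hupre, hua]
        have hsim := ih (by rw [hua]; simp) hupre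
        obtain ⟨hmem, hfa2⟩ := A.pick_spec hsim (hrun u a hua)
        have hx1 : x < (A.rhsOf a π u).length := by
          rw [A.rhsOf_length _ _ _ (by omega)]
          exact hxa
        have hsim2 := GFP.forall₂_dwSim_getD A hfa2 hx1
        rw [A.rhsOf_get _ _ _ hxa hx1] at hsim2
        exact hsim2

theorem GFP.rebuild_run (A : TDTA Q α rank) (t : RTree α rank) (π πr : List ℕ → Q)
    (v : List ℕ) (a0 : α) (rs : List Q)
    (hrun : A.IsRun t π)
    (hva : t.label v = some a0)
    (hτ' : (πr v, a0, rs) ∈ A.delta)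
    (hfa : List.Forall₂ A.dwSim (A.rhsOf a0 π v) rs)
    (hπr : A.IsRun (GFP.truncAt t v) πr)
    (hoff : ∀ v' x, v' <+: v → v' ≠ v → (GFP.truncAt t v).inRunDom (v' ++ [x]) →
      ¬(v' ++ [x]) <+: v → A.dwSim (π (v' ++ [x])) (πr (v' ++ [x]))) :
    A.IsRun t (GFP.rebuild A t π πr v rs) := by
  intro w a hwa
  by_cases hpre : w <+: v
  · by_cases hwv : w = v
    · subst hwv
      rw [hwa] at hva
      obtain rfl : a = a0 := Option.some.inj hva
      have hrv : GFP.rebuild A t π πr w rs w = πr w :=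
        GFP.rebuild_prefix _ _ _ _ _ _ hpre
      have hrhs : A.rhsOf a (GFP.rebuild A t π πr w rs) w = rs := by
        by_cases h0 : rank a = 0
        · have hr0 : rs = [A.top] := (A.rank_ok _ hτ').1 h0
          rw [TDTA.rhsOf, if_pos h0, hr0]
        · have hlen : rs.length = rank a := (A.rank_ok _ hτ').2 (Nat.pos_of_ne_zero h0)
          rw [TDTA.rhsOf, if_neg h0]
          have heach : ∀ i ∈ List.range (rank a),
              GFP.rebuild A t π πr w rs (w ++ [i]) = rs.getD i A.top := by
            intro i _
            rw [GFP.rebuild_snoc, if_pos rfl]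
          rw [List.map_congr_left heach]
          exact GFP.map_getD_range rs A.top (rank a) hlen
      rw [hrhs, hrv]
      exact hτ'
    · have hlab' : (GFP.truncAt t v).label w = some a := by
        rw [GFP.truncAt_label_of_prefix hpre]
        exact hwa
      have hmem := hπr w a hlab'
      have hrv : GFP.rebuild A t π πr v rs w = πr w :=
        GFP.rebuild_prefix _ _ _ _ _ _ hpre
      have hrhs : A.rhsOf a (GFP.rebuild A t π πr v rs) w = A.rhsOf a πr w := by
        by_cases h0 : rank a = 0
        · rw [TDTA.rhsOf, TDTA.rhsOf, if_pos h0, if_pos h0]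
        · rw [TDTA.rhsOf, TDTA.rhsOf, if_neg h0, if_neg h0]
          apply List.map_congr_left
          intro i _
          rw [GFP.rebuild_snoc, if_neg hwv, if_pos hpre]
      rw [hrhs, hrv]
      exact hmem
  · have hsim := GFP.rebuild_sim A t π πr v a0 rs hrun hva hfa hoff w (by rw [hwa]; simp) hpre
    obtain ⟨hmem, hfa2⟩ := A.pick_spec hsim (hrun w a hwa)
    have hwv : w ≠ v := fun he => hpre (he ▸ List.prefix_refl v)
    have hrhs : A.rhsOf a (GFP.rebuild A t π πr v rs) w =
        A.pick (GFP.rebuild A t π πr v rs w) a (A.rhsOf a π w) := by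
      by_cases h0 : rank a = 0
      · have h1 : A.rhsOf a π w = [A.top] := by rw [TDTA.rhsOf, if_pos h0]
        rw [h1] at hfa2
        obtain ⟨b, u, hhd, htl, hpe⟩ := List.forall₂_cons_left_iff.mp hfa2
        rw [List.forall₂_nil_left_iff] at htl
        simp only [TDTA.rhsOf, h0, if_true, ite_true, if_pos]
        rw [hpe, htl, A.dwSim_top hhd]
      · have hlen : (A.pick (GFP.rebuild A t π πr v rs w) a (A.rhsOf a π w)).length = rank a := by
          rw [← hfa2.length_eq, A.rhsOf_length _ _ _ h0]
        rw [TDTA.rhsOf, if_neg h0]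
        have heach : ∀ i ∈ List.range (rank a),
            GFP.rebuild A t π πr v rs (w ++ [i]) =
              (A.pick (GFP.rebuild A t π πr v rs w) a (A.rhsOf a π w)).getD i A.top := by
          intro i _
          rw [GFP.rebuild_snoc, if_neg hwv, if_neg hpre, hwa]
          rfl
        rw [List.map_congr_left heach]
        exact GFP.map_getD_range _ A.top (rank a) hlen
    rw [hrhs]
    exact hmem

open Classical in
noncomputable def GFP.ht [Fintype Q] (A : TDTA Q α rank) (q : Q) : ℕ :=
  (Finset.univ.filter fun r => A.dwSim r q).card

theorem GFP.ht_le_card [Fintype Q] (A : TDTA Q α rank) (q : Q) :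
    GFP.ht A q ≤ Fintype.card Q := by
  unfold GFP.ht
  classical
  exact Finset.card_filter_le _ _

theorem GFP.ht_mono [Fintype Q] (A : TDTA Q α rank) {q r : Q} (h : A.dwSim q r) :
    GFP.ht A q ≤ GFP.ht A r := by
  unfold GFP.ht
  classical
  apply Finset.card_le_card
  intro x hx
  simp only [Finset.mem_filter, Finset.mem_univ, true_and] at hx ⊢
  exact A.dwSim_trans hx h

theorem GFP.ht_lt [Fintype Q] (A : TDTA Q α rank) {q r : Q} (h : A.dwSim q r)
    (h' : ¬A.dwSim r q) : GFP.ht A q < GFP.ht A r := by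
  unfold GFP.ht
  classical
  apply Finset.card_lt_card
  rw [Finset.ssubset_iff_of_subset]
  · refine ⟨r, ?_, ?_⟩
    · simp only [Finset.mem_filter, Finset.mem_univ, true_and]
      exact A.dwSim_refl r
    · simp only [Finset.mem_filter, Finset.mem_univ, true_and]
      exact h'
  · intro x hx
    simp only [Finset.mem_filter, Finset.mem_univ, true_and] at hx ⊢
    exact A.dwSim_trans hx h

open Classical in
theorem GFP.measure_lt [Fintype Q] (A : TDTA Q α rank)
    (D : Finset (List ℕ)) (v w0 : List ℕ) (hw0 : w0 ∈ D) (hw0len : w0.length = v.length + 1)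
    (π π' : List ℕ → Q)
    (hmono : ∀ w ∈ D, ¬w <+: v → GFP.ht A (π w) ≤ GFP.ht A (π' w))
    (hstrict : GFP.ht A (π w0) < GFP.ht A (π' w0)) :
    (∑ w ∈ D, GFP.ht A (π w) * (D.card * Fintype.card Q + 1) ^ w.length)
      < ∑ w ∈ D, GFP.ht A (π' w) * (D.card * Fintype.card Q + 1) ^ w.length := by
  set B := D.card * Fintype.card Q + 1 with hB
  have hB1 : 1 ≤ B := Nat.le_add_left 1 _
  have hw0np : ¬w0 <+: v := fun h => by
    have := h.length_le
    omega
  have h1 := Finset.sum_filter_add_sum_filter_not D (fun w => w <+: v)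
    (fun w => GFP.ht A (π w) * B ^ w.length)
  have h2 := Finset.sum_filter_add_sum_filter_not D (fun w => w <+: v)
    (fun w => GFP.ht A (π' w) * B ^ w.length)
  have h3 : ∑ w ∈ D.filter (fun w => w <+: v), GFP.ht A (π w) * B ^ w.length
      < B ^ (v.length + 1) := by
    calc ∑ w ∈ D.filter (fun w => w <+: v), GFP.ht A (π w) * B ^ w.length
        ≤ ∑ _w ∈ D.filter (fun w => w <+: v), Fintype.card Q * B ^ v.length := by
          apply Finset.sum_le_sum
          intro w hw
          have hwv : w <+: v := (Finset.mem_filter.mp hw).2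
          exact Nat.mul_le_mul (GFP.ht_le_card A _)
            (Nat.pow_le_pow_right hB1 hwv.length_le)
      _ = (D.filter (fun w => w <+: v)).card * (Fintype.card Q * B ^ v.length) := by
          rw [Finset.sum_const, smul_eq_mul]
      _ ≤ D.card * (Fintype.card Q * B ^ v.length) :=
          Nat.mul_le_mul_right _ (Finset.card_filter_le _ _)
      _ < B ^ (v.length + 1) := by
          have hpow : 0 < B ^ v.length := Nat.pow_pos (by omega)
          calc D.card * (Fintype.card Q * B ^ v.length)
              = (D.card * Fintype.card Q) * B ^ v.length := by ring
            _ < B * B ^ v.length := (Nat.mul_lt_mul_right hpow).mpr (by omega)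
            _ = B ^ (v.length + 1) := by rw [pow_succ, Nat.mul_comm]
  have hw0mem : w0 ∈ D.filter (fun w => ¬w <+: v) := Finset.mem_filter.mpr ⟨hw0, hw0np⟩
  have h4 : ∑ w ∈ D.filter (fun w => ¬w <+: v), GFP.ht A (π w) * B ^ w.length
        + B ^ (v.length + 1)
      ≤ ∑ w ∈ D.filter (fun w => ¬w <+: v), GFP.ht A (π' w) * B ^ w.length := by
    rw [← Finset.sum_erase_add _ (fun w => GFP.ht A (π w) * B ^ w.length) hw0mem,
      ← Finset.sum_erase_add _ (fun w => GFP.ht A (π' w) * B ^ w.length) hw0mem]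
    have h5 : ∑ w ∈ (D.filter (fun w => ¬w <+: v)).erase w0,
          GFP.ht A (π w) * B ^ w.length
        ≤ ∑ w ∈ (D.filter (fun w => ¬w <+: v)).erase w0,
          GFP.ht A (π' w) * B ^ w.length := by
      apply Finset.sum_le_sum
      intro w hw
      have hwD := Finset.mem_filter.mp (Finset.mem_of_mem_erase hw)
      exact Nat.mul_le_mul_right _ (hmono w hwD.1 hwD.2)
    have h6 : GFP.ht A (π w0) * B ^ w0.length + B ^ (v.length + 1)
        ≤ GFP.ht A (π' w0) * B ^ w0.length := by
      rw [hw0len]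
      calc GFP.ht A (π w0) * B ^ (v.length + 1) + B ^ (v.length + 1)
          = (GFP.ht A (π w0) + 1) * B ^ (v.length + 1) := by ring
        _ ≤ GFP.ht A (π' w0) * B ^ (v.length + 1) :=
            Nat.mul_le_mul_right _ hstrict
    omega
  omega

end GFPAux
/-- `P(⊆up(≼dw), <dw)` is good for pruning. -/
theorem statement_7 {Q α : Type} [Fintype Q] [Fintype α] {rank : α → ℕ}
    (A : TDTA Q α rank) :
    (A.prune (pruneRel (A.upIncl A.dwSim)
      (liftStrict A.dwSim (strictOf A.dwSim)))).lang = A.lang := by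
  classical
  ext t
  set P := pruneRel (A.upIncl A.dwSim) (liftStrict A.dwSim (strictOf A.dwSim)) with hP
  constructor
  · rintro ⟨q, hq, hcl, π, hrun, hq0⟩
    exact ⟨q, hq, hcl, π, fun w a hwa => (hrun w a hwa).1, hq0⟩
  · rintro ⟨q, hq, hcl, π0, hrun0, hq0⟩
    set D := t.finite.toFinset with hD
    set B := D.card * Fintype.card Q + 1 with hBdef
    set M : (List ℕ → Q) → ℕ := fun π => ∑ w ∈ D, GFP.ht A (π w) * B ^ w.length with hM
    set Bnd := ∑ w ∈ D, Fintype.card Q * B ^ w.length with hBnd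
    have hMle : ∀ π : List ℕ → Q, M π ≤ Bnd := fun π =>
      Finset.sum_le_sum fun w _ => Nat.mul_le_mul_right _ (GFP.ht_le_card A _)
    have key : ∀ n (π : List ℕ → Q), Bnd + 1 - M π ≤ n → A.IsRun t π → π [] ∈ A.init →
        ∃ π', (A.prune P).IsRun t π' ∧ π' [] ∈ A.init := by
      intro n
      induction n with
      | zero =>
        intro π hn _ _
        have := hMle π
        omega
      | succ n ih =>
        intro π hn hrun hinit
        by_cases hall : ∀ w a, t.label w = some a →
            ¬∃ τ' ∈ A.delta, P (π w, a, A.rhsOf a π w) τ'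
        · exact ⟨π, fun w a hwa => ⟨hrun w a hwa, hall w a hwa⟩, hinit⟩
        · push_neg at hall
          obtain ⟨v, a0, hva, τ', hτ'mem, hPτ⟩ := hall
          rw [hP] at hPτ
          obtain ⟨p', a', rs⟩ := τ'
          obtain ⟨hup, hsym, hlift⟩ := hPτ
          have ha' : a0 = a' := hsym
          subst ha'
          have hup' : A.upIncl A.dwSim (π v) p' := hup
          have hfa : List.Forall₂ A.dwSim (A.rhsOf a0 π v) rs := hlift.1
          obtain ⟨i0, hi0q, hi0r, hstrict⟩ := hlift.2
          have hi0q' : i0 < (A.rhsOf a0 π v).length := hi0q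
          have hstrict' : strictOf A.dwSim ((A.rhsOf a0 π v).get ⟨i0, hi0q'⟩)
              (rs.get ⟨i0, hi0r⟩) := hstrict
          have hrank0 : rank a0 ≠ 0 := by
            intro h0
            have hqs : A.rhsOf a0 π v = [A.top] := by rw [TDTA.rhsOf, if_pos h0]
            have hrs0 : rs = [A.top] := (A.rank_ok _ hτ'mem).1 h0
            have h1 : (A.rhsOf a0 π v).get ⟨i0, hi0q'⟩ = A.top := by simp [hqs]
            have h2 : rs.get ⟨i0, hi0r⟩ = A.top := by simp [hrs0]
            rw [h1, h2] at hstrict'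
            exact hstrict'.2 (A.dwSim_refl A.top)
          have hi0rank : i0 < rank a0 := by
            rwa [A.rhsOf_length _ _ _ hrank0] at hi0q'
          have hrun' : A.IsRun (GFP.truncAt t v) π := GFP.truncAt_run hrun v
          obtain ⟨πr, hπrrun, hπrv, hπrinit, hoff⟩ :=
            hup'.2 (GFP.truncAt t v) v (GFP.truncAt_leaf hva) π hrun' rfl
          have hτ'' : (πr v, a0, rs) ∈ A.delta := by rw [hπrv]; exact hτ'mem
          set π' := GFP.rebuild A t π πr v rs with hπ'
          have hrunπ' : A.IsRun t π' :=
            GFP.rebuild_run A t π πr v a0 rs hrun hva hτ'' hfa hπrrun hoff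
          have hinit' : π' [] ∈ A.init := by
            rw [hπ', GFP.rebuild_nil]
            exact hπrinit [] ⟨v, rfl⟩ hinit
          set w0 := v ++ [i0] with hw0def
          have hw0mem : w0 ∈ D := by
            rw [hD, Set.Finite.mem_toFinset]
            exact hcl v a0 hva i0 hi0rank
          have hπw0 : π w0 = (A.rhsOf a0 π v).get ⟨i0, hi0q'⟩ :=
            (A.rhsOf_get a0 π v hi0rank hi0q').symm
          have hπ'w0 : π' w0 = rs.get ⟨i0, hi0r⟩ := by
            rw [hπ', hw0def, GFP.rebuild_snoc, if_pos rfl]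
            simp [List.getD, List.getElem?_eq_getElem hi0r]
          have hmono : ∀ w ∈ D, ¬w <+: v → GFP.ht A (π w) ≤ GFP.ht A (π' w) := by
            intro w hw hnp
            refine GFP.ht_mono A ?_
            rw [hπ']
            refine GFP.rebuild_sim A t π πr v a0 rs hrun hva hfa hoff w ?_ hnp
            rw [hD, Set.Finite.mem_toFinset] at hw
            exact hw
          have hstrictht : GFP.ht A (π w0) < GFP.ht A (π' w0) := by
            rw [hπw0, hπ'w0]
            exact GFP.ht_lt A hstrict'.1 hstrict'.2
          have hlt : M π < M π' :=
            GFP.measure_lt A D v w0 hw0mem (by simp [hw0def]) π π' hmono hstrictht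
          have hb1 := hMle π'
          exact ih π' (by omega) hrunπ' hinit'
    obtain ⟨π', hπ'run, hπ'init⟩ := key (Bnd + 1) π0 (by omega) hrun0 (by rw [hq0]; exact hq)
    exact ⟨π' [], hπ'init, hcl, π', hπ'run, rfl⟩
end

section
/- Let A = (Σ, Q, δ, I) be a top-down tree automaton and let ≡dw := ⊆dw ∩ (⊆dw)⁻¹ be the equivalence induced by downward trace inclusion. Then ≡dw is good for quotienting, i.e., L(A/≡dw) = L(A). -/
/-- The quotient automaton `A/≡` w.r.t. a setoid `s` on its states. -/
def TDTA.quotAut {Q α : Type} {rank : α → ℕ} (A : TDTA Q α rank) (s : Setoid Q) :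
    TDTA (Quotient s) α rank where
  top := Quotient.mk s A.top
  init := {x | ∃ q ∈ A.init, x = Quotient.mk s q}
  delta := {τ | ∃ q a qs, (q, a, qs) ∈ A.delta ∧
    τ = (Quotient.mk s q, a, qs.map fun p => Quotient.mk s p)}
  rank_ok := by
    rintro τ ⟨q, a, qs, hmem, rfl⟩
    refine ⟨fun h0 => ?_, fun h0 => ?_⟩
    · have h : qs = [A.top] := (A.rank_ok _ hmem).1 h0
      simp [h]
    · simpa using (A.rank_ok _ hmem).2 h0


section Aux

variable {Q α : Type} {rank : α → ℕ}

namespace RTree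

lemma label_prefix (t : RTree α rank) (v : List ℕ) :
    ∀ u, t.label (v ++ u) ≠ none → t.label v ≠ none := by
  intro u
  induction u using List.reverseRecOn generalizing v with
  | nil => simp
  | append_singleton u i ih =>
    intro h
    have h' : t.label ((v ++ u) ++ [i]) ≠ none := by simpa [List.append_assoc] using h
    obtain ⟨a, ha, _⟩ := t.prefixClosed (v ++ u) i h'
    exact ih v (by simp [ha])

/-- The `i`-th child subtree. -/
def child (t : RTree α rank) (i : ℕ) : RTree α rank where
  label v := t.label (i :: v)
  finite := by
    have : {v : List ℕ | t.label (i :: v) ≠ none} =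
        (fun v : List ℕ => i :: v) ⁻¹' {w | t.label w ≠ none} := rfl
    rw [this]
    exact Set.Finite.preimage (Function.Injective.injOn (fun a b h => by simpa using h))
      t.finite
  prefixClosed := by
    intro v j h
    exact t.prefixClosed (i :: v) j (by simpa using h)

lemma child_label (t : RTree α rank) (i : ℕ) (v : List ℕ) :
    (t.child i).label v = t.label (i :: v) := rfl

lemma child_closed {t : RTree α rank} (ht : t.IsClosed) (i : ℕ) :
    (t.child i).IsClosed := by
  intro v a ha j hj
  have := ht (i :: v) a ha j hj
  simpa [child_label] using this

lemma child_card_lt {t : RTree α rank} (hroot : t.label [] ≠ none) (i : ℕ) :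
    (t.child i).finite.toFinset.card < t.finite.toFinset.card := by
  have hsub : ((t.child i).finite.toFinset.image (List.cons i)) ⊆
      t.finite.toFinset.erase [] := by
    intro w hw
    simp only [Finset.mem_image, Set.Finite.mem_toFinset, Set.mem_setOf_eq] at hw
    obtain ⟨v, hv, rfl⟩ := hw
    simp only [Finset.mem_erase, Set.Finite.mem_toFinset, Set.mem_setOf_eq]
    exact ⟨by simp, hv⟩
  calc (t.child i).finite.toFinset.card
      = ((t.child i).finite.toFinset.image (List.cons i)).card := by
        rw [Finset.card_image_of_injective _ (fun a b h => by simpa using h)]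
    _ ≤ (t.finite.toFinset.erase []).card := Finset.card_le_card hsub
    _ < t.finite.toFinset.card :=
        Finset.card_erase_lt_of_mem (by simpa using hroot)

end RTree

namespace TDTA

/-- A run on the automaton pushes down to a run on the quotient. -/
lemma quot_run (A : TDTA Q α rank) (s : Setoid Q) (t : RTree α rank)
    (π : List ℕ → Q) (hπ : A.IsRun t π) :
    (A.quotAut s).IsRun t (fun v => Quotient.mk s (π v)) := by
  intro v a ha
  refine ⟨π v, a, A.rhsOf a π v, hπ v a ha, ?_⟩
  have : (A.quotAut s).rhsOf a (fun v => Quotient.mk s (π v)) v =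
      (A.rhsOf a π v).map (fun p => Quotient.mk s p) := by
    unfold rhsOf
    by_cases h0 : rank a = 0
    · simp [h0, quotAut]
    · simp [h0, List.map_map, Function.comp]
  rw [this]

/-- Lift a run of the quotient automaton on a closed tree back to the original
automaton, starting from any representative. -/
lemma lift_run (A : TDTA Q α rank) (s : Setoid Q)
    (hs : ∀ q r, s.r q r ↔ (A.dwIncl q r ∧ A.dwIncl r q)) :
    ∀ n (t : RTree α rank), t.finite.toFinset.card = n → t.IsClosed →
      ∀ πb, (A.quotAut s).IsRun t πb → ∀ q, πb [] = Quotient.mk s q →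
        ∃ π, A.IsRun t π ∧ π [] = q := by
  intro n
  induction n using Nat.strong_induction_on with
  | _ n IH =>
  intro t hcard hclosed πb hπb q hq
  by_cases hroot : t.label [] = none
  · -- empty tree
    refine ⟨fun _ => q, ?_, rfl⟩
    intro v a ha
    exact absurd (t.label_prefix [] v (by simpa using ha ▸ (by simp : some a ≠ none)))
      (by simpa using hroot)
  · obtain ⟨a, ha⟩ := Option.ne_none_iff_exists'.mp hroot
    obtain ⟨p, a', ps, hmem, heq⟩ := hπb [] a ha
    simp only [Prod.mk.injEq] at heq
    obtain ⟨hπp, ha', hrhs⟩ := heq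
    subst ha'
    have hp : Quotient.mk s p = Quotient.mk s q := hπp.symm.trans hq
    have hpq : A.dwIncl p q := ((hs p q).mp (Quotient.exact hp)).1
    -- build a run from p, then use dwIncl
    suffices hsuff : ∃ π, A.IsRun t π ∧ π [] = p by
      obtain ⟨π, hπ, hπ0⟩ := hsuff
      exact hpq t hclosed π hπ hπ0
    by_cases h0 : rank a = 0
    · -- leaf root; tree has a single node
      have hps : ps = [A.top] := (A.rank_ok _ hmem).1 h0
      refine ⟨fun _ => p, ?_, rfl⟩
      intro v b hb
      cases v with
      | nil =>
        have hba : a = b := by rw [ha] at hb; injection hb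
        subst hba
        have hra : A.rhsOf a (fun _ => p) [] = [A.top] := by
          unfold TDTA.rhsOf; rw [if_pos h0]
        rw [hra, ← hps]
        exact hmem
      | cons i w =>
        exfalso
        have h1 : t.label [i] ≠ none :=
          t.label_prefix [i] w (by simp [hb])
        obtain ⟨a2, ha2, hi⟩ := t.prefixClosed [] i (by simpa using h1)
        rw [ha] at ha2
        injection ha2 with ha2
        subst ha2
        omega
    · -- internal root
      have hlen : ps.length = rank a := (A.rank_ok _ hmem).2 (Nat.pos_of_ne_zero h0)
      have hget : ∀ i (h : i < rank a),
          πb [i] = Quotient.mk s (ps.get ⟨i, by omega⟩) := by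
        intro i h
        have h2 : ((A.quotAut s).rhsOf a πb [])[i]? =
            (ps.map (fun r => Quotient.mk s r))[i]? := by rw [hrhs]
        unfold rhsOf at h2
        rw [if_neg h0] at h2
        simp only [List.getElem?_map, List.getElem?_range h] at h2
        have h3 : ps[i]? = some (ps.get ⟨i, by omega⟩) := by
          simp [List.getElem?_eq_getElem, hlen ▸ h]
        rw [h3] at h2
        simpa using h2
      -- runs on children by IH
      have hchild : ∀ i : Fin (rank a), ∃ π,
          A.IsRun (t.child i) π ∧ π [] = ps.get ⟨i, by omega⟩ := by
        intro ⟨i, hi⟩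
        have hrun_c : (A.quotAut s).IsRun (t.child i) (fun v => πb (i :: v)) := by
          intro v b hb
          exact hπb (i :: v) b hb
        exact IH _ (hcard ▸ RTree.child_card_lt hroot i) _ rfl
          (RTree.child_closed hclosed i) _ hrun_c _ (hget i hi)
      choose πs hπs hπs0 using hchild
      refine ⟨fun v => match v with
        | [] => p
        | i :: w => if h : i < rank a then πs ⟨i, h⟩ w else A.top, ?_, rfl⟩
      intro v b hb
      cases v with
      | nil =>
        have hba : a = b := by rw [ha] at hb; injection hb
        subst hba
        have hps : A.rhsOf a (fun v => match v with
            | [] => p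
            | i :: w => if h : i < rank a then πs ⟨i, h⟩ w else A.top) [] = ps := by
          unfold TDTA.rhsOf
          rw [if_neg h0]
          apply List.ext_getElem (by simp [hlen])
          intro i h1 h2
          simp only [List.getElem_map, List.getElem_range] at *
          have hi : i < rank a := by simpa using h1
          simp only [List.nil_append, dif_pos hi]
          have := hπs0 ⟨i, hi⟩
          simp only [List.get_eq_getElem] at this
          exact this
        rw [hps]; exact hmem
      | cons i w =>
        have h1 : t.label [i] ≠ none :=
          t.label_prefix [i] w (by simp [hb])
        obtain ⟨a2, ha2, hi⟩ := t.prefixClosed [] i (by simpa using h1)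
        rw [ha] at ha2
        injection ha2 with ha2
        subst ha2
        have hrc := hπs ⟨i, hi⟩ w b hb
        have hrw : A.rhsOf b (fun v => match v with
            | [] => p
            | i :: w => if h : i < rank a then πs ⟨i, h⟩ w else A.top) (i :: w) =
            A.rhsOf b (πs ⟨i, hi⟩) w := by
          unfold rhsOf
          by_cases hb0 : rank b = 0
          · simp [hb0]
          · rw [if_neg hb0, if_neg hb0]
            apply List.map_congr_left
            intro j _
            simp only [List.cons_append, dif_pos hi]
        simp only [dif_pos hi]
        rw [hrw]
        exact hrc

end TDTA

end Aux

/-- The equivalence `≡dw = ⊆dw ∩ ⊇dw` is good for quotienting. -/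
theorem statement_8 {Q α : Type} [Fintype Q] [Fintype α] {rank : α → ℕ}
    (A : TDTA Q α rank) (s : Setoid Q)
    (hs : ∀ q r, s.r q r ↔ (A.dwIncl q r ∧ A.dwIncl r q)) :
    (A.quotAut s).lang = A.lang := by
  ext t
  constructor
  · rintro ⟨x, ⟨q0, hq0, rfl⟩, hclosed, πb, hrun, hroot⟩
    obtain ⟨π, hπ, hπ0⟩ := A.lift_run s hs _ t rfl hclosed πb hrun q0 hroot
    exact ⟨q0, hq0, hclosed, π, hπ, hπ0⟩
  · rintro ⟨q, hq, hclosed, π, hπ, hπ0⟩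
    exact ⟨Quotient.mk s q, ⟨q, hq, rfl⟩, hclosed,
      fun v => Quotient.mk s (π v), A.quot_run s t π hπ, by simp only []; rw [hπ0]⟩
end

section
/- There exists a nondeterministic finite word automaton A = (Σ, Q, δ, I, F) for which P(⊂bw, ≼di) is not good for pruning, i.e., L(Prune(A, P(⊂bw, ≼di))) ≠ L(A), where ⊂bw = ⊆bw ∖ (⊆bw)⁻¹ is the strict version of backward trace inclusion and ≼di is the maximal direct forward simulation preorder. (A witness is the 8-state automaton over {a,b,c} of Figure 1(b) of the paper, which loses the word aaa after pruning.) -/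
/-- A nondeterministic finite word automaton. -/
structure WNFA (Q α : Type) where
  delta : Set (Q × α × Q)
  init : Set Q
  final : Set Q

namespace WNFA

variable {Q α : Type}

/-- Reachability along a word. -/
inductive Reach (A : WNFA Q α) : Q → List α → Q → Prop
  | nil (q : Q) : Reach A q [] q
  | cons {q q' q'' : Q} {a : α} {w : List α} :
      (q, a, q') ∈ A.delta → Reach A q' w q'' → Reach A q (a :: w) q''

/-- The language of the automaton. -/
def lang (A : WNFA Q α) : Set (List α) :=
  {w | ∃ q ∈ A.init, ∃ q' ∈ A.final, A.Reach q w q'}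

/-- `qs` is the sequence of states of a trace on the word `w`
(`qs` has length `w.length + 1`). -/
inductive IsTrace (A : WNFA Q α) : List Q → List α → Prop
  | nil (q : Q) : IsTrace A [q] []
  | cons {q q' : Q} {qs : List Q} {a : α} {w : List α} :
      (q, a, q') ∈ A.delta → IsTrace A (q' :: qs) w → IsTrace A (q :: q' :: qs) (a :: w)

/-- `D` is a direct forward simulation on `A`. -/
def IsDiSim (A : WNFA Q α) (D : Q → Q → Prop) : Prop :=
  ∀ q r, D q r → (q ∈ A.final → r ∈ A.final) ∧
    ∀ a q', (q, a, q') ∈ A.delta → ∃ r', (r, a, r') ∈ A.delta ∧ D q' r'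

/-- The maximal direct forward simulation preorder `≼di`. -/
def diSim (A : WNFA Q α) (q r : Q) : Prop := ∃ D, A.IsDiSim D ∧ D q r

/-- `B` is a backward simulation on `A`. -/
def IsBwSim (A : WNFA Q α) (B : Q → Q → Prop) : Prop :=
  ∀ q r, B q r → (q ∈ A.final → r ∈ A.final) ∧ (q ∈ A.init → r ∈ A.init) ∧
    ∀ a q', (q', a, q) ∈ A.delta → ∃ r', (r', a, r) ∈ A.delta ∧ B q' r'

/-- The maximal backward simulation preorder `≼bw`. -/
def bwSim (A : WNFA Q α) (q r : Q) : Prop := ∃ B, A.IsBwSim B ∧ B q r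

/-- Direct forward trace inclusion `q ⊆di r`. -/
def diIncl (A : WNFA Q α) (q r : Q) : Prop :=
  (q ∈ A.final → r ∈ A.final) ∧
  ∀ w qs, A.IsTrace qs w → qs.head? = some q →
    ∃ rs, A.IsTrace rs w ∧ rs.head? = some r ∧
      List.Forall₂ (fun x y => x ∈ A.final → y ∈ A.final) qs rs

/-- Backward trace inclusion `q ⊆bw r`. -/
def bwIncl (A : WNFA Q α) (q r : Q) : Prop :=
  (q ∈ A.final → r ∈ A.final) ∧ (q ∈ A.init → r ∈ A.init) ∧
  ∀ w qs, A.IsTrace qs w → qs.getLast? = some q →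
    ∃ rs, A.IsTrace rs w ∧ rs.getLast? = some r ∧
      List.Forall₂ (fun x y => (x ∈ A.final → y ∈ A.final) ∧ (x ∈ A.init → y ∈ A.init)) qs rs

/-- Pruning: keep exactly the transitions that are maximal w.r.t. `P`. -/
def prune (A : WNFA Q α) (P : Q × α × Q → Q × α × Q → Prop) : WNFA Q α where
  delta := {τ | τ ∈ A.delta ∧ ¬∃ τ' ∈ A.delta, P τ τ'}
  init := A.init
  final := A.final

end WNFA

/-- The pruning relation `P(Ru, Rd)` on word-automaton transitions. -/
def wPruneRel {Q α : Type} (Ru Rd : Q → Q → Prop) :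
    Q × α × Q → Q × α × Q → Prop :=
  fun τ τ' => Ru τ.1 τ'.1 ∧ τ.2.1 = τ'.2.1 ∧ Rd τ.2.2 τ'.2.2

namespace CE

abbrev Q5 := Fin 5
abbrev A2 := Fin 2

def dlt : List (Q5 × A2 × Q5) :=
  [(0,0,2),(1,1,4),(2,0,1),(2,0,4),(3,0,0),(3,1,4),(4,0,0),(4,1,3)]

def Aex : WNFA Q5 A2 :=
  ⟨{t | t ∈ dlt}, {q | q = 0}, {q | q = 0 ∨ q = 2}⟩

/-- Certify backward trace inclusion from an invariant of the backward subset game. -/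
theorem bwIncl_of_inv {Q α : Type} (A : WNFA Q α) (S : Q → Finset Q → Prop)
    (H1 : ∀ q R, S q R → ∀ r ∈ R, (q ∈ A.final → r ∈ A.final) ∧ (q ∈ A.init → r ∈ A.init))
    (H3 : ∀ q R, S q R → R.Nonempty)
    (H2 : ∀ q R, S q R → ∀ a q0, (q0, a, q) ∈ A.delta →
      ∃ R0, S q0 R0 ∧ ∀ r0 ∈ R0, ∃ r ∈ R, (r0, a, r) ∈ A.delta)
    {q r : Q} (hS : S q {r}) : A.bwIncl q r := by
  have key : ∀ {qs w}, A.IsTrace qs w → ∀ q R, qs.getLast? = some q → S q R →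
      ∃ q0 R0, qs.head? = some q0 ∧ S q0 R0 ∧ ∀ r0 ∈ R0,
        ∃ rs, A.IsTrace rs w ∧ rs.head? = some r0 ∧ (∃ r' ∈ R, rs.getLast? = some r') ∧
          List.Forall₂ (fun x y => (x ∈ A.final → y ∈ A.final) ∧ (x ∈ A.init → y ∈ A.init)) qs rs := by
    intro qs w h
    induction h with
    | nil q' =>
      intro q R hlast hS
      have hq : q' = q := by simpa using hlast
      subst hq
      exact ⟨q', R, rfl, hS, fun r0 hr0 =>
        ⟨[r0], .nil r0, rfl, ⟨r0, hr0, rfl⟩, .cons (H1 _ _ hS r0 hr0) .nil⟩⟩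
    | @cons qa qb qs' a w' hδ htr ih =>
      intro q R hlast hS
      have hlast' : (qb :: qs').getLast? = some q := by
        simpa [List.getLast?_cons_cons] using hlast
      obtain ⟨q0, R1, hhead, hS1, hmatch⟩ := ih q R hlast' hS
      have hq0 : q0 = qb := by simpa using hhead.symm
      subst hq0
      obtain ⟨R0, hS0, hstep⟩ := H2 _ _ hS1 a qa hδ
      refine ⟨qa, R0, rfl, hS0, fun r0 hr0 => ?_⟩
      obtain ⟨r1, hr1, hedge⟩ := hstep r0 hr0
      obtain ⟨rs, hrs, hrshead, hlast2, hfa⟩ := hmatch r1 hr1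
      cases rs with
      | nil => simp at hrshead
      | cons r1' rs' =>
        have h5 : r1' = r1 := by simpa using hrshead
        obtain ⟨r', hr', h3⟩ := hlast2
        rw [h5] at hrs hfa h3
        refine ⟨r0 :: r1 :: rs', .cons hedge hrs, rfl, ?_, .cons (H1 _ _ hS0 r0 hr0) hfa⟩
        exact ⟨r', hr', by simpa [List.getLast?_cons_cons] using h3⟩
  have hflag := H1 _ _ hS r (Finset.mem_singleton_self r)
  refine ⟨hflag.1, hflag.2, ?_⟩
  intro w qs htr hlast
  obtain ⟨q0, R0, hh, hS0, hm⟩ := key htr q {r} hlast hS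
  obtain ⟨r0, hr0⟩ := H3 _ _ hS0
  obtain ⟨rs, h1, h2, ⟨r', hr', h3⟩, h4⟩ := hm r0 hr0
  have : r' = r := Finset.mem_singleton.mp hr'
  subst this
  exact ⟨rs, h1, h3, h4⟩

def Sl : List (Q5 × Finset Q5) :=
  [(3,{4}), (1,{4}), (1,{1,3,4}), (2,{2}), (0,{0}),
   (3,{3,4}), (3,{1,3,4}), (4,{3,4}), (4,{1,3}), (4,{1,3,4})]

abbrev Sinv : Q5 → Finset Q5 → Prop := fun q R => (q, R) ∈ Sl

lemma H1fact : ∀ q R, Sinv q R → ∀ r ∈ R,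
    (q ∈ Aex.final → r ∈ Aex.final) ∧ (q ∈ Aex.init → r ∈ Aex.init) := by
  have h : ∀ q R, Sinv q R → ∀ r ∈ R,
      ((q = 0 ∨ q = 2) → (r = 0 ∨ r = 2)) ∧ (q = 0 → r = 0) := by decide
  exact h

lemma H3fact : ∀ q R, Sinv q R → R.Nonempty := by decide

set_option synthInstance.maxHeartbeats 1000000 in
set_option synthInstance.maxSize 2048 in
set_option maxHeartbeats 2000000 in
lemma H2fact : ∀ q R, Sinv q R → ∀ (a : A2) q0, (q0, a, q) ∈ Aex.delta →
    ∃ R0, Sinv q0 R0 ∧ ∀ r0 ∈ R0, ∃ r ∈ R, (r0, a, r) ∈ Aex.delta := by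
  have h : ∀ q R, Sinv q R → ∀ (a : A2) q0, (q0, a, q) ∈ dlt →
      ∃ R0, Sinv q0 R0 ∧ ∀ r0 ∈ R0, ∃ r ∈ R, (r0, a, r) ∈ dlt := by decide
  exact h

lemma bw_14 : Aex.bwIncl 1 4 :=
  bwIncl_of_inv Aex Sinv H1fact H3fact H2fact (show Sinv 1 {4} by decide)

lemma bw_34 : Aex.bwIncl 3 4 :=
  bwIncl_of_inv Aex Sinv H1fact H3fact H2fact (show Sinv 3 {4} by decide)

lemma not_bw_43 : ¬ Aex.bwIncl 4 3 := by
  rintro ⟨-, -, h3⟩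
  have htr : Aex.IsTrace [2, 4] [0] :=
    .cons (show ((2:Q5),(0:A2),(4:Q5)) ∈ dlt by decide) (.nil 4)
  obtain ⟨rs, htr', hlast, -⟩ := h3 [0] [2, 4] htr rfl
  cases htr' with
  | @cons q q' qs a w h1 h2 =>
    cases h2 with
    | nil =>
      have hq' : q' = 3 := by simpa using hlast
      subst hq'
      exact (by decide : ∀ x : Q5, (x,(0:A2),(3:Q5)) ∉ dlt) q h1

lemma not_bw_41 : ¬ Aex.bwIncl 4 1 := by
  rintro ⟨-, -, h3⟩
  have htr : Aex.IsTrace [3, 4] [1] :=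
    .cons (show ((3:Q5),(1:A2),(4:Q5)) ∈ dlt by decide) (.nil 4)
  obtain ⟨rs, htr', hlast, -⟩ := h3 [1] [3, 4] htr rfl
  cases htr' with
  | @cons q q' qs a w h1 h2 =>
    cases h2 with
    | nil =>
      have hq' : q' = 1 := by simpa using hlast
      subst hq'
      exact (by decide : ∀ x : Q5, (x,(1:A2),(1:Q5)) ∉ dlt) q h1

abbrev Dsim : Q5 → Q5 → Prop := fun q r =>
  (q, r) ∈ [((0:Q5),(0:Q5)),(1,1),(2,2),(3,3),(4,4),(3,4),(4,3)]

set_option synthInstance.maxHeartbeats 1000000 in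
set_option synthInstance.maxSize 2048 in
set_option maxHeartbeats 2000000 in
lemma isDiSim_D : Aex.IsDiSim Dsim := by
  have h : ∀ q r : Q5, Dsim q r → ((q = 0 ∨ q = 2) → (r = 0 ∨ r = 2)) ∧
      ∀ (a : A2) (q' : Q5), (q, a, q') ∈ dlt → ∃ r', (r, a, r') ∈ dlt ∧ Dsim q' r' := by
    decide
  exact h

lemma di_43 : Aex.diSim 4 3 := ⟨Dsim, isDiSim_D, by decide⟩
lemma di_00 : Aex.diSim 0 0 := ⟨Dsim, isDiSim_D, by decide⟩

end CE

/-- There is an NFA for which `P(⊂bw, ≼di)` is not good for pruning. -/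
theorem statement_12 : ∃ (Q α : Type) (_ : Fintype Q) (_ : Fintype α)
    (A : WNFA Q α),
    (A.prune (wPruneRel (strictOf A.bwIncl) A.diSim)).lang ≠ A.lang := by
  classical
  refine ⟨CE.Q5, CE.A2, inferInstance, inferInstance, CE.Aex, ?_⟩
  intro h
  -- the word a a b a
  have hw : [(0:CE.A2),0,1,0] ∈ CE.Aex.lang := by
    refine ⟨0, rfl, 0, Or.inl rfl, ?_⟩
    exact .cons (show ((0:CE.Q5),(0:CE.A2),(2:CE.Q5)) ∈ CE.dlt by decide)
      (.cons (show ((2:CE.Q5),(0:CE.A2),(4:CE.Q5)) ∈ CE.dlt by decide)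
        (.cons (show ((4:CE.Q5),(1:CE.A2),(3:CE.Q5)) ∈ CE.dlt by decide)
          (.cons (show ((3:CE.Q5),(0:CE.A2),(0:CE.Q5)) ∈ CE.dlt by decide) (.nil 0))))
  rw [← h] at hw
  obtain ⟨q, hqI, q', hq'F, hr⟩ := hw
  have hq0 : q = 0 := hqI
  subst hq0
  set P := wPruneRel (strictOf CE.Aex.bwIncl) CE.Aex.diSim with hP
  cases hr with
  | @cons _ x1 _ _ _ h1 hr2 =>
  obtain ⟨h1d, -⟩ := h1
  have hx1 : x1 = 2 := (by decide : ∀ x : CE.Q5, ((0:CE.Q5),(0:CE.A2),x) ∈ CE.dlt → x = 2) x1 h1d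
  subst hx1
  cases hr2 with
  | @cons _ x2 _ _ _ h2 hr3 =>
  obtain ⟨h2d, -⟩ := h2
  have hx2 : x2 = 1 ∨ x2 = 4 :=
    (by decide : ∀ x : CE.Q5, ((2:CE.Q5),(0:CE.A2),x) ∈ CE.dlt → x = 1 ∨ x = 4) x2 h2d
  rcases hx2 with hx2 | hx2 <;> subst hx2
  · cases hr3 with
    | @cons _ x3 _ _ _ h3 hr4 =>
    obtain ⟨h3d, h3n⟩ := h3
    have hx3 : x3 = 4 :=
      (by decide : ∀ x : CE.Q5, ((1:CE.Q5),(1:CE.A2),x) ∈ CE.dlt → x = 4) x3 h3d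
    subst hx3
    exact h3n ⟨(4, 1, 3), (show ((4:CE.Q5),(1:CE.A2),(3:CE.Q5)) ∈ CE.dlt by decide),
      ⟨CE.bw_14, CE.not_bw_41⟩, rfl, CE.di_43⟩
  · cases hr3 with
    | @cons _ x3 _ _ _ h3 hr4 =>
    obtain ⟨h3d, -⟩ := h3
    have hx3 : x3 = 3 :=
      (by decide : ∀ x : CE.Q5, ((4:CE.Q5),(1:CE.A2),x) ∈ CE.dlt → x = 3) x3 h3d
    subst hx3
    cases hr4 with
    | @cons _ x4 _ _ _ h4 hr5 =>
    obtain ⟨h4d, h4n⟩ := h4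
    have hx4 : x4 = 0 :=
      (by decide : ∀ x : CE.Q5, ((3:CE.Q5),(0:CE.A2),x) ∈ CE.dlt → x = 0) x4 h4d
    subst hx4
    exact h4n ⟨(4, 0, 0), (show ((4:CE.Q5),(0:CE.A2),(0:CE.Q5)) ∈ CE.dlt by decide),
      ⟨CE.bw_34, CE.not_bw_43⟩, rfl, CE.di_00⟩
end

section
/- There exists a nondeterministic finite word automaton A = (Σ, Q, δ, I, F) for which P(≼bw, ⊂di) is not good for pruning, i.e., L(Prune(A, P(≼bw, ⊂di))) ≠ L(A), where ≼bw is the maximal backward simulation preorder and ⊂di = ⊆di ∖ (⊆di)⁻¹ is the strict version of direct forward trace inclusion. (A witness is the 9-state automaton over {a,b,c} of Figure 1(c) of the paper, which loses the word aaa after pruning.) -/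
namespace Cex

abbrev Q5 := Fin 5
abbrev A1 := Fin 1

def dlist : List (Q5 × A1 × Q5) :=
  [(0,0,1),(0,0,3),(1,0,4),(2,0,0),(2,0,2),(3,0,1),(4,0,1),(4,0,2)]

abbrev A : WNFA Q5 A1 :=
  ⟨{t | t ∈ dlist}, {q | q ∈ ([4] : List Q5)}, {q | q ∈ ([1] : List Q5)}⟩

lemma delta_iff (t : Q5 × A1 × Q5) : t ∈ A.delta ↔ t ∈ dlist := Iff.rfl
lemma final_iff (q : Q5) : q ∈ A.final ↔ q ∈ ([1] : List Q5) := Iff.rfl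

/-- Boolean reachability in a transition list. -/
def reachb (L : List (Q5 × A1 × Q5)) : Q5 → List A1 → Q5 → Bool
  | q, [], q' => q == q'
  | q, a :: w, q' => L.any fun t => t.1 == q && t.2.1 == a && reachb L t.2.2 w q'

lemma reachb_of_reach (B : WNFA Q5 A1) (L : List (Q5 × A1 × Q5))
    (hL : ∀ t ∈ B.delta, t ∈ L) {q w q'} (h : B.Reach q w q') :
    reachb L q w q' = true := by
  induction h with
  | nil q => simp [reachb]
  | @cons q q' q'' a w ht hr ih =>
      simp only [reachb, List.any_eq_true]
      exact ⟨(q, a, q'), hL _ ht, by simp [ih]⟩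

/-- Boolean check: existence of a trace from `r` over `w` whose final positions
cover the pattern `bs` (final state = 1). -/
def covb (L : List (Q5 × A1 × Q5)) : Q5 → List A1 → List Bool → Bool
  | r, [], [b] => !b || (r == 1)
  | r, a :: w, b :: bs =>
      (!b || (r == 1)) && (L.any fun t => t.1 == r && t.2.1 == a && covb L t.2.2 w bs)
  | _, _, _ => false

lemma covb_of_trace : ∀ {rs w}, A.IsTrace rs w →
    ∀ {bs : List Bool}, List.Forall₂ (fun b y => b = true → y ∈ A.final) bs rs →
    ∀ {r}, rs.head? = some r → covb dlist r w bs = true := by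
  intro rs w h
  induction h with
  | nil q =>
      intro bs hf r hr
      cases bs with
      | nil => cases hf
      | cons b bs' =>
          rcases hf with _ | ⟨hb, hnil⟩
          cases hnil
          simp only [List.head?_cons, Option.some.injEq] at hr
          subst hr
          cases b with
          | false => simp [covb]
          | true =>
              have hq : q ∈ ([1] : List Q5) := (final_iff q).1 (hb rfl)
              simp only [List.mem_cons, List.not_mem_nil, or_false] at hq
              simp [covb, hq]
  | @cons q q' qs a w ht htr ih =>
      intro bs hf r hr
      cases bs with
      | nil => cases hf
      | cons b bs' =>
          rcases hf with _ | ⟨hb, hftail⟩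
          simp only [List.head?_cons, Option.some.injEq] at hr
          subst hr
          have h2 : (dlist.any fun t => t.1 == q && t.2.1 == a && covb dlist t.2.2 w bs') = true := by
            simp only [List.any_eq_true]
            exact ⟨(q, a, q'), ht, by simp [ih hftail rfl]⟩
          cases b with
          | false => simp [covb, h2]
          | true =>
              have hq : q ∈ ([1] : List Q5) := (final_iff q).1 (hb rfl)
              simp only [List.mem_cons, List.not_mem_nil, or_false] at hq
              subst hq
              simp [covb, h2]

/-- A multipebble direct-simulation certificate. -/
def Mlist : List (Q5 × List Q5) :=
  [(0,[0]),(0,[1,3]),(0,[1,4]),(1,[1]),(2,[0]),(2,[1,3]),(2,[1,4]),(2,[2]),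
   (3,[0]),(3,[3]),(3,[4]),(4,[4])]

lemma mlist_fin : ∀ p ∈ Mlist, p.2 ≠ [] ∧
    (p.1 ∈ ([1] : List Q5) → ∀ r ∈ p.2, r ∈ ([1] : List Q5)) := by decide

lemma mlist_step : ∀ p ∈ Mlist, ∀ t ∈ dlist, t.1 = p.1 →
    ∃ p' ∈ Mlist, p'.1 = t.2.2 ∧ ∀ r' ∈ p'.2, ∃ r ∈ p.2, (r, t.2.1, r') ∈ dlist := by
  decide

lemma extract : ∀ {qs w}, A.IsTrace qs w → ∀ {q S}, (q, S) ∈ Mlist →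
    qs.head? = some q →
    ∃ r ∈ S, ∃ rs, A.IsTrace rs w ∧ rs.head? = some r ∧
      List.Forall₂ (fun x y => x ∈ A.final → y ∈ A.final) qs rs := by
  intro qs w h
  induction h with
  | nil q0 =>
      intro q S hM hh
      simp only [List.head?_cons, Option.some.injEq] at hh
      subst hh
      obtain ⟨hne, hfin⟩ := mlist_fin (q0, S) hM
      cases S with
      | nil => exact absurd rfl hne
      | cons r S' =>
          refine ⟨r, List.mem_cons_self .., [r], .nil r, rfl, ?_⟩
          exact List.Forall₂.cons
            (fun hq => (final_iff r).2 (hfin ((final_iff q0).1 hq) r (List.mem_cons_self ..)))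
            List.Forall₂.nil
  | @cons q q' qs a w ht htr ih =>
      intro q0 S hM hh
      simp only [List.head?_cons, Option.some.injEq] at hh
      subst hh
      obtain ⟨hne, hfin⟩ := mlist_fin (q, S) hM
      obtain ⟨p', hp'M, hp'1, hp'step⟩ := mlist_step (q, S) hM (q, a, q') ht rfl
      have hp'M' : (q', p'.2) ∈ Mlist := by
        obtain ⟨x, y⟩ := p'
        simp only at hp'1
        subst hp'1
        exact hp'M
      obtain ⟨r', hr'S, rs', htr', hh', hf'⟩ := ih hp'M' rfl
      obtain ⟨r, hrS, hrt⟩ := hp'step r' hr'S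
      cases rs' with
      | nil => simp at hh'
      | cons r'' rs'' =>
          simp only [List.head?_cons, Option.some.injEq] at hh'
          have hrt' : (r, a, r'') ∈ dlist := by rw [hh']; exact hrt
          refine ⟨r, hrS, r :: r'' :: rs'', .cons hrt' htr', rfl, ?_⟩
          exact List.Forall₂.cons
            (fun hq => (final_iff r).2 (hfin ((final_iff q).1 hq) r hrS)) hf'

lemma diIncl_of_M {q r : Q5} (h : (q, [r]) ∈ Mlist) : A.diIncl q r := by
  obtain ⟨-, hfin⟩ := mlist_fin (q, [r]) h
  refine ⟨fun hq => (final_iff r).2 (hfin ((final_iff q).1 hq) r (List.mem_cons_self ..)), ?_⟩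
  intro w qs htr hh
  obtain ⟨r', hr', rs, h1, h2, h3⟩ := extract htr h hh
  simp only [List.mem_cons, List.not_mem_nil, or_false] at hr'
  subst hr'
  exact ⟨rs, h1, h2, h3⟩

def Blist : List (Q5 × Q5) := [(0,0),(0,2),(1,1),(2,2),(3,3),(4,4)]

lemma isBwSim_B : A.IsBwSim (fun q r => (q, r) ∈ Blist) := by
  intro q r hqr
  refine ⟨?_, ?_, ?_⟩
  · intro h
    rw [final_iff] at h ⊢
    revert hqr h
    revert q r; decide
  · intro h
    have h' : q ∈ ([4] : List Q5) := h
    show r ∈ ([4] : List Q5)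
    revert hqr h'
    revert q r; decide
  · intro a q' ht
    have ht' : (q', a, q) ∈ dlist := ht
    have key : ∀ q r : Q5, (q, r) ∈ Blist → ∀ t ∈ dlist, t.2.2 = q →
        ∃ r', (r', t.2.1, r) ∈ dlist ∧ (t.1, r') ∈ Blist := by
      decide
    obtain ⟨r', h1, h2⟩ := key q r hqr (q', a, q) ht' rfl
    exact ⟨r', h1, h2⟩

lemma bw_of_B {q r : Q5} (h : (q, r) ∈ Blist) : A.bwSim q r :=
  ⟨_, isBwSim_B, h⟩

lemma not_diIncl_03 : ¬ A.diIncl 0 3 := by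
  rintro ⟨-, h⟩
  have htr : A.IsTrace [0, 3, 1] [0, 0] :=
    .cons (by decide) (.cons (by decide) (.nil 1))
  obtain ⟨rs, h1, h2, h3⟩ := h [0, 0] [0, 3, 1] htr rfl
  have hc : covb dlist 3 [0, 0] [false, false, true] = true := by
    refine covb_of_trace h1 ?_ h2
    rcases h3 with _ | ⟨hb0, h3⟩
    rcases h3 with _ | ⟨hb1, h3⟩
    rcases h3 with _ | ⟨hb2, h3⟩
    cases h3
    exact .cons (by simp) (.cons (by simp) (.cons (fun _ => hb2 (by decide)) .nil))
  exact absurd hc (by decide)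

lemma not_diIncl_02 : ¬ A.diIncl 0 2 := by
  rintro ⟨-, h⟩
  have htr : A.IsTrace [0, 1] [0] := .cons (by decide) (.nil 1)
  obtain ⟨rs, h1, h2, h3⟩ := h [0] [0, 1] htr rfl
  have hc : covb dlist 2 [0] [false, true] = true := by
    refine covb_of_trace h1 ?_ h2
    rcases h3 with _ | ⟨hb0, h3⟩
    rcases h3 with _ | ⟨hb1, h3⟩
    cases h3
    exact .cons (by simp) (.cons (fun _ => hb1 (by decide)) .nil)
  exact absurd hc (by decide)

def kept : List (Q5 × A1 × Q5) := [(0,0,1),(1,0,4),(2,0,0),(3,0,1),(4,0,1),(4,0,2)]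

end Cex

/-- There is an NFA for which `P(≼bw, ⊂di)` is not good for pruning. -/
theorem statement_13 : ∃ (Q α : Type) (_ : Fintype Q) (_ : Fintype α)
    (A : WNFA Q α),
    (A.prune (wPruneRel A.bwSim (strictOf A.diIncl))).lang ≠ A.lang := by
  refine ⟨Cex.Q5, Cex.A1, inferInstance, inferInstance, Cex.A, ?_⟩
  intro h
  have hmem : ([0, 0, 0, 0] : List Cex.A1) ∈ Cex.A.lang := by
    refine ⟨4, by decide, 1, by decide, ?_⟩
    exact .cons (q' := 2) (by decide) (.cons (q' := 0) (by decide)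
      (.cons (q' := 3) (by decide) (.cons (q' := 1) (by decide) (.nil 1))))
  rw [← h] at hmem
  obtain ⟨q, hq, q', hq', hr⟩ := hmem
  have hq4 : q = 4 := by
    have h' : q ∈ ([4] : List Cex.Q5) := hq
    simpa using h'
  have hq1 : q' = 1 := by
    have h' : q' ∈ ([1] : List Cex.Q5) := hq'
    simpa using h'
  subst hq4 hq1
  have hsub : ∀ t ∈ (Cex.A.prune (wPruneRel Cex.A.bwSim (strictOf Cex.A.diIncl))).delta,
      t ∈ Cex.kept := by
    rintro t ⟨hd, hnp⟩
    have hd' : t ∈ Cex.dlist := hd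
    simp only [Cex.dlist, List.mem_cons, List.not_mem_nil, or_false] at hd'
    rcases hd' with rfl | rfl | rfl | rfl | rfl | rfl | rfl | rfl
    · decide
    · exact absurd ⟨(2, 0, 0), by decide,
        Cex.bw_of_B (by decide), rfl,
        Cex.diIncl_of_M (by decide), Cex.not_diIncl_03⟩ hnp
    · decide
    · decide
    · exact absurd ⟨(2, 0, 0), by decide,
        Cex.bw_of_B (by decide), rfl,
        Cex.diIncl_of_M (by decide), Cex.not_diIncl_02⟩ hnp
    · decide
    · decide
    · decide
  have hrb := Cex.reachb_of_reach _ Cex.kept hsub hr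
  exact absurd hrb (by decide)
end

section
/- There exists a top-down tree automaton A = (Σ, Q, δ, I) for which P(<up(<dw), id) is not good for pruning, i.e., L(Prune(A, P(<up(<dw), id))) ≠ L(A), where <dw = ≼dw ∖ (≼dw)⁻¹ is the strict version of the maximal downward simulation, ≼up(<dw) is the maximal upward simulation induced by <dw, and <up(<dw) = ≼up(<dw) ∖ (≼up(<dw))⁻¹; here P compares rules with equal tuples of target states and <up(<dw)-related source states. (A witness is the automaton of Figure 1(a) of the paper, over Σ₀ = {c,d}, Σ₁ = {b}, Σ₂ = {a}, which loses the tree a(c,d) after pruning.) -/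
namespace CE

inductive St : Type | top | q1 | q2 | q3
  deriving DecidableEq, Repr

instance : Fintype St where
  elems := {St.top, St.q1, St.q2, St.q3}
  complete := fun x => by cases x <;> simp

inductive Sym : Type | a | c | d
  deriving DecidableEq, Repr

instance : Fintype Sym where
  elems := {Sym.a, Sym.c, Sym.d}
  complete := fun x => by cases x <;> simp

def rank : Sym → ℕ | .a => 2 | .c => 0 | .d => 0

open St Sym

def ruleList : List (St × Sym × List St) :=
  [(q3, a, [q2, q1]), (q3, a, [q1, q2]), (q1, c, [top]), (q1, d, [top]), (q2, d, [top])]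

def A : TDTA St Sym rank where
  top := top
  init := {q3}
  delta := {τ | τ ∈ ruleList}
  rank_ok := by
    intro τ hτ
    simp only [Set.mem_setOf_eq, ruleList, List.mem_cons, List.not_mem_nil, or_false] at hτ
    rcases hτ with rfl | rfl | rfl | rfl | rfl <;> simp [rank]

lemma top_eq : A.top = top := rfl

lemma mem_delta {τ : St × Sym × List St} (h : τ ∈ ruleList) : τ ∈ A.delta := h

lemma delta_cases {τ : St × Sym × List St} (h : τ ∈ A.delta) :
    τ = (q3, a, [q2, q1]) ∨ τ = (q3, a, [q1, q2]) ∨ τ = (q1, c, [top]) ∨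
      τ = (q1, d, [top]) ∨ τ = (q2, d, [top]) := by
  have h' : τ ∈ ruleList := h
  simpa only [ruleList, List.mem_cons, List.not_mem_nil, or_false] using h'

lemma mem1 : (q3, a, [q2, q1]) ∈ A.delta := mem_delta (by simp [ruleList])
lemma mem2 : (q3, a, [q1, q2]) ∈ A.delta := mem_delta (by simp [ruleList])
lemma mem3 : (q1, c, [top]) ∈ A.delta := mem_delta (by simp [ruleList])
lemma mem4 : (q1, d, [top]) ∈ A.delta := mem_delta (by simp [ruleList])
lemma mem5 : (q2, d, [top]) ∈ A.delta := mem_delta (by simp [ruleList])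

-- downward simulation witness
def D0 : St → St → Prop := fun q r => (q = q2 ∧ r = q1) ∨ (q = top ∧ r = top)

lemma isDwSim_D0 : A.IsDwSim D0 := by
  intro q r hqr
  constructor
  · intro hq
    rw [top_eq] at hq
    rcases hqr with ⟨h1, h2⟩ | ⟨h1, h2⟩
    · rw [hq] at h1; cases h1
    · rw [h2, top_eq]
  · intro b qs hmem
    rcases hqr with ⟨rfl, rfl⟩ | ⟨rfl, rfl⟩ <;>
      rcases delta_cases hmem with h | h | h | h | h <;>
      simp only [Prod.mk.injEq] at h <;> obtain ⟨h1, rfl, rfl⟩ := h <;> first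
        | exact ⟨[top], mem4, List.Forall₂.cons (Or.inr ⟨rfl, rfl⟩) List.Forall₂.nil⟩
        | (cases h1)

lemma dw_q2_q1 : A.dwSim q2 q1 := ⟨D0, isDwSim_D0, Or.inl ⟨rfl, rfl⟩⟩

lemma not_dw_q1_q2 : ¬ A.dwSim q1 q2 := by
  rintro ⟨D, hD, h⟩
  obtain ⟨rs, hrs, -⟩ := (hD q1 q2 h).2 c [top] mem3
  rcases delta_cases hrs with h' | h' | h' | h' | h' <;>
    simp only [Prod.mk.injEq] at h' <;> obtain ⟨h1, h2, -⟩ := h' <;> first | exact absurd h1 (by decide) | exact absurd h2 (by decide)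

lemma sdw_q2_q1 : strictOf A.dwSim q2 q1 := ⟨dw_q2_q1, not_dw_q1_q2⟩

-- upward simulation witness
def U0 : St → St → Prop := fun q r => (q = q1 ∧ r = q2) ∨ (q = q3 ∧ r = q3)

lemma isUpSim_U0 : A.IsUpSim (strictOf A.dwSim) U0 := by
  intro q r hqr
  refine ⟨?_, ?_, ?_⟩
  · intro hq
    rw [top_eq] at hq
    rcases hqr with ⟨h1, _⟩ | ⟨h1, _⟩ <;> rw [hq] at h1 <;> cases h1
  · intro hq
    have hq' : q = q3 := hq
    rcases hqr with ⟨h1, h2⟩ | ⟨h1, h2⟩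
    · rw [hq'] at h1; cases h1
    · exact h2
  · intro q' b qs hmem i hi
    rcases hqr with ⟨rfl, rfl⟩ | ⟨rfl, rfl⟩ <;>
      rcases delta_cases hmem with h | h | h | h | h <;>
      simp only [Prod.mk.injEq] at h <;> obtain ⟨rfl, rfl, rfl⟩ := h <;>
      rcases i with ⟨iv, hlt⟩ <;> simp only [List.length_cons, List.length_nil] at hlt
    -- case q1 ⟶ q2, rule (q3, a, [q2, q1])
    · match iv, hlt, hi with
      | 0, _, hi => cases hi
      | 1, _, _ =>
        refine ⟨q3, [q1, q2], rfl, mem2, rfl, Or.inr ⟨rfl, rfl⟩, ?_⟩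
        rintro ⟨jv, hj⟩ hji
        match jv, hj with
        | 0, _ => exact sdw_q2_q1
        | 1, _ => exact absurd rfl hji
    -- case q1 ⟶ q2, rule (q3, a, [q1, q2])
    · match iv, hlt, hi with
      | 1, _, hi => cases hi
      | 0, _, _ =>
        refine ⟨q3, [q2, q1], rfl, mem1, rfl, Or.inr ⟨rfl, rfl⟩, ?_⟩
        rintro ⟨jv, hj⟩ hji
        match jv, hj with
        | 1, _ => exact sdw_q2_q1
        | 0, _ => exact absurd rfl hji
    · match iv, hlt, hi with
      | 0, _, hi => cases hi
    · match iv, hlt, hi with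
      | 0, _, hi => cases hi
    · match iv, hlt, hi with
      | 0, _, hi => cases hi
    -- case q3 ⟶ q3: q3 occurs in no right-hand side
    · match iv, hlt, hi with
      | 0, _, hi => cases hi
      | 1, _, hi => cases hi
    · match iv, hlt, hi with
      | 0, _, hi => cases hi
      | 1, _, hi => cases hi
    · match iv, hlt, hi with
      | 0, _, hi => cases hi
    · match iv, hlt, hi with
      | 0, _, hi => cases hi
    · match iv, hlt, hi with
      | 0, _, hi => cases hi

lemma up_q1_q2 : A.upSim (strictOf A.dwSim) q1 q2 := ⟨U0, isUpSim_U0, Or.inl ⟨rfl, rfl⟩⟩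

lemma not_up_q2_q1 : ¬ A.upSim (strictOf A.dwSim) q2 q1 := by
  rintro ⟨U, hU, h⟩
  obtain ⟨r', rs, hlen, hmem, hget, -, hside⟩ :=
    (hU q2 q1 h).2.2 q3 a [q2, q1] mem1 ⟨0, by norm_num⟩ rfl
  rcases delta_cases hmem with h' | h' | h' | h' | h' <;>
    simp only [Prod.mk.injEq] at h' <;> obtain ⟨-, h2, rfl⟩ := h'
  · -- rs = [q2, q1] : rs.get 0 = q2 ≠ q1
    cases hget
  · -- rs = [q1, q2] : side condition at j = 1 gives strictOf dwSim q1 q2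
    have := hside ⟨1, by norm_num⟩ (by simp [Fin.ext_iff])
    exact not_dw_q1_q2 this.1
  · cases h2
  · cases h2
  · cases h2

lemma sup_q1_q2 : strictOf (A.upSim (strictOf A.dwSim)) q1 q2 := ⟨up_q1_q2, not_up_q2_q1⟩

-- The tree a(d, d)
def tlabel : List ℕ → Option Sym := fun v =>
  if v = [] then some a else if v = [0] then some d else if v = [1] then some d else none

def t : RTree Sym rank where
  label := tlabel
  finite := by
    apply Set.Finite.subset
      (((Set.finite_singleton ([1] : List ℕ)).insert [0]).insert [])
    intro v hv
    simp only [Set.mem_setOf_eq, tlabel] at hv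
    split_ifs at hv with h1 h2 h3 <;> simp_all
  prefixClosed := by
    intro v i h
    simp only [tlabel] at h
    split_ifs at h with h1 h2 h3
    · exact absurd h1 (by simp)
    · rcases v with _ | ⟨x, v⟩
      · obtain rfl : i = 0 := by simpa using h2
        exact ⟨a, by simp [tlabel], by simp [rank]⟩
      · exfalso
        rw [List.cons_append, List.cons.injEq] at h2
        exact (List.append_ne_nil_of_right_ne_nil v (by simp)) h2.2
    · rcases v with _ | ⟨x, v⟩
      · obtain rfl : i = 1 := by simpa using h3
        exact ⟨a, by simp [tlabel], by simp [rank]⟩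
      · exfalso
        rw [List.cons_append, List.cons.injEq] at h3
        exact (List.append_ne_nil_of_right_ne_nil v (by simp)) h3.2
    · exact absurd h (by simp)

lemma t_closed : t.IsClosed := by
  intro v s hv i hi
  simp only [t, tlabel] at hv ⊢
  split_ifs at hv with h1 h2 h3
  · subst h1
    obtain rfl : a = s := by simpa using hv
    simp only [rank] at hi
    interval_cases i <;> simp
  · obtain rfl : d = s := by simpa using hv
    simp [rank] at hi
  · obtain rfl : d = s := by simpa using hv
    simp [rank] at hi

def π0 : List ℕ → St := fun v => if v = [] then q3 else if v = [0] then q2 else q1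

lemma t_mem_lang : t ∈ A.lang := by
  refine ⟨q3, rfl, t_closed, π0, ?_, rfl⟩
  intro v s hv
  simp only [t, tlabel] at hv
  split_ifs at hv with h1 h2 h3
  · subst h1
    obtain rfl : a = s := by simpa using hv
    have : A.rhsOf a π0 [] = [q2, q1] := by
      simp [TDTA.rhsOf, rank, List.range_succ, π0]
    rw [this]
    exact mem1
  · subst h2
    obtain rfl : d = s := by simpa using hv
    have : A.rhsOf d π0 [0] = [top] := by simp [TDTA.rhsOf, rank, top_eq]
    rw [this]
    have : π0 [0] = q2 := by simp [π0]
    rw [this]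
    exact mem5
  · subst h3
    obtain rfl : d = s := by simpa using hv
    have : A.rhsOf d π0 [1] = [top] := by simp [TDTA.rhsOf, rank, top_eq]
    rw [this]
    have : π0 [1] = q1 := by simp [π0]
    rw [this]
    exact mem4

notation "P0" => pruneRel (strictOf (A.upSim (strictOf A.dwSim))) (Eq (α := List St))

lemma q1_d_pruned : (q1, d, [top]) ∉ (A.prune P0).delta := by
  intro h
  exact h.2 ⟨(q2, d, [top]), mem5, sup_q1_q2, rfl, rfl⟩

lemma prune_delta_sub {τ : St × Sym × List St} (h : τ ∈ (A.prune P0).delta) : τ ∈ A.delta :=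
  h.1

lemma t_not_mem_prune : t ∉ (A.prune P0).lang := by
  rintro ⟨q, hq, -, π, hrun, hπ⟩
  obtain rfl : q = q3 := hq
  have hroot := hrun [] a (by simp [t, tlabel])
  have hrhs : (A.prune P0).rhsOf a π [] = [π [0], π [1]] := by
    simp [TDTA.rhsOf, rank, List.range_succ]
  rw [hrhs, hπ] at hroot
  have hd : ∀ w : List ℕ, w = [0] ∨ w = [1] → π w = q1 → False := by
    rintro w hw hπw
    have hlf := hrun w d (by rcases hw with rfl | rfl <;> simp [t, tlabel])
    have heq : (A.prune P0).rhsOf d π w = [top] := by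
      simp [TDTA.rhsOf, rank, TDTA.prune, top_eq]
    rw [heq, hπw] at hlf
    exact q1_d_pruned hlf
  rcases delta_cases (prune_delta_sub hroot) with h | h | h | h | h <;>
    simp only [Prod.mk.injEq, List.cons.injEq] at h
  · exact hd [1] (Or.inr rfl) h.2.2.2.1
  · exact hd [0] (Or.inl rfl) h.2.2.1
  · exact absurd h.2.1 (by decide)
  · exact absurd h.2.1 (by decide)
  · exact absurd h.2.1 (by decide)

end CE

/-- There is a tree automaton for which `P(<up(<dw), id)` is not good for
pruning. -/
theorem statement_14 : ∃ (Q α : Type) (_ : Fintype Q) (_ : Fintype α)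
    (rank : α → ℕ) (A : TDTA Q α rank),
    (A.prune (pruneRel (strictOf (A.upSim (strictOf A.dwSim))) Eq)).lang ≠ A.lang := by
  refine ⟨CE.St, CE.Sym, inferInstance, inferInstance, CE.rank, CE.A, fun h => ?_⟩
  exact CE.t_not_mem_prune (h.symm ▸ CE.t_mem_lang)
end
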